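/- arXiv:2008.05645 — 6 statements merged into one kernel-verified Lean document; each statement's English description precedes it below -/
import Mathlib

section
/- Let ℓ ≥ 5 be a prime, and let ζ be a primitive ℓ-th root of unity in a field K of characteristic different from ℓ. Then the determinant of the ℓ × ℓ Vandermonde matrix V(ζ) = (ζ^{ij})_{0 ≤ i,j ≤ ℓ−1} equals ((−1)^{(ℓ−1)(ℓ+1)/8} · (ζ−1)(ζ²−1)···(ζ^{(ℓ−1)/2}−1))^ℓ. -/
/-- Let `ℓ ≥ 5` be a prime and `ζ` a primitive `ℓ`-th root of unity in a
field `K` whose characteristic does not divide `ℓ`.  Then the determinant of the `ℓ × ℓ`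
Vandermonde matrix `V(ζ) = (ζ^{ij})` equals
`((−1)^{(ℓ−1)(ℓ+1)/8} · (ζ−1)(ζ²−1)⋯(ζ^{(ℓ−1)/2}−1))^ℓ`. -/
theorem stmt7 (ℓ : ℕ) (hℓ : ℓ.Prime) (hℓ5 : 5 ≤ ℓ)
    (K : Type*) [Field K] (hchar : ¬ (ringChar K ∣ ℓ))
    (ζ : K) (hζ : IsPrimitiveRoot ζ ℓ) :
    Matrix.det (Matrix.of fun i j : Fin ℓ => ζ ^ ((i : ℕ) * (j : ℕ))) =
      ((-1 : K) ^ ((ℓ - 1) * (ℓ + 1) / 8) *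
        ∏ i ∈ Finset.Icc 1 ((ℓ - 1) / 2), (ζ ^ i - 1)) ^ ℓ := by
  have hoddℓ : Odd ℓ := hℓ.odd_of_ne_two (by omega)
  obtain ⟨m, hm⟩ := hoddℓ
  have hm2 : 2 ≤ m := by omega
  have hz1 : ζ ^ ℓ = 1 := hζ.pow_eq_one
  -- Step 1: Vandermonde determinant
  have h1 : Matrix.det (Matrix.of fun i j : Fin ℓ => ζ ^ ((i : ℕ) * (j : ℕ)))
      = ∏ i : Fin ℓ, ∏ j ∈ Finset.Ioi i, (ζ ^ (j : ℕ) - ζ ^ (i : ℕ)) := by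
    have : (Matrix.of fun i j : Fin ℓ => ζ ^ ((i : ℕ) * (j : ℕ)))
        = Matrix.vandermonde (fun i : Fin ℓ => ζ ^ (i : ℕ)) := by
      ext i j
      simp [Matrix.vandermonde, ← pow_mul]
    rw [this, Matrix.det_vandermonde]
  -- Step 2/3: convert to products over ℕ
  have h2 : ∀ i : Fin ℓ, (∏ j ∈ Finset.Ioi i, (ζ ^ (j : ℕ) - ζ ^ (i : ℕ)))
      = ∏ j ∈ Finset.Ioc (i : ℕ) (ℓ - 1), (ζ ^ j - ζ ^ (i : ℕ)) := by
    intro i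
    rw [show Finset.Ioc (i : ℕ) (ℓ - 1) = Finset.Ioo (i : ℕ) ℓ by ext x; simp only [Finset.mem_Ioc, Finset.mem_Ioo]; omega]
    rw [← Fin.map_valEmbedding_Ioi, Finset.prod_map]
    rfl
  have h3 : (∏ i : Fin ℓ, ∏ j ∈ Finset.Ioi i, (ζ ^ (j : ℕ) - ζ ^ (i : ℕ)))
      = ∏ i ∈ Finset.range ℓ, ∏ j ∈ Finset.Ioc i (ℓ - 1), (ζ ^ j - ζ ^ i) := by
    rw [Finset.prod_congr rfl fun i _ => h2 i]
    exact Fin.prod_univ_eq_prod_range (fun i => ∏ j ∈ Finset.Ioc i (ℓ - 1), (ζ ^ j - ζ ^ i)) ℓ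
  -- Step 4: reindex inner product by d = j - i
  have h4 : ∀ i ∈ Finset.range ℓ, (∏ j ∈ Finset.Ioc i (ℓ - 1), (ζ ^ j - ζ ^ i))
      = ∏ d ∈ Finset.Icc 1 (ℓ - 1 - i), (ζ ^ i * (ζ ^ d - 1)) := by
    intro i hi
    rw [Finset.mem_range] at hi
    have hset : Finset.Ioc i (ℓ - 1) = (Finset.Icc 1 (ℓ - 1 - i)).map (addLeftEmbedding i) := by
      rw [Finset.map_add_left_Icc, ← Finset.Icc_add_one_left_eq_Ioc]
      congr 1 <;> omega
    rw [hset, Finset.prod_map]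
    refine Finset.prod_congr rfl fun d hd => ?_
    simp only [addLeftEmbedding_apply]
    rw [pow_add]; ring
  -- Step 5: swap the order of the double product
  have h5 : (∏ i ∈ Finset.range ℓ, ∏ d ∈ Finset.Icc 1 (ℓ - 1 - i), (ζ ^ i * (ζ ^ d - 1)))
      = ∏ d ∈ Finset.Icc 1 (ℓ - 1), ∏ i ∈ Finset.range (ℓ - d), (ζ ^ i * (ζ ^ d - 1)) := by
    refine Finset.prod_comm' fun i d => ?_
    simp only [Finset.mem_range, Finset.mem_Icc]
    omega
  -- Step 6: evaluate the inner product
  set S : ℕ → ℕ := fun n => ∑ i ∈ Finset.range n, i with hS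
  set g : ℕ → K := fun d => ζ ^ S (ℓ - d) * (ζ ^ d - 1) ^ (ℓ - d) with hg
  have h6 : ∀ d, (∏ i ∈ Finset.range (ℓ - d), (ζ ^ i * (ζ ^ d - 1))) = g d := by
    intro d
    rw [Finset.prod_mul_distrib, Finset.prod_pow_eq_pow_sum, Finset.prod_const,
      Finset.card_range]
  -- Step 7: pass to a product over `range (m + m)` and fold it in half
  have h7 : (∏ d ∈ Finset.Icc 1 (ℓ - 1), g d) = ∏ k ∈ Finset.range (m + m), g (1 + k) := by
    rw [show ℓ - 1 = m + m by omega, ← Finset.Ico_add_one_right_eq_Icc, Finset.prod_Ico_eq_prod_range]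
    rfl
  have h8 : (∏ k ∈ Finset.range (m + m), g (1 + k))
      = ∏ k ∈ Finset.range m, (g (1 + k) * g (1 + (m + (m - 1 - k)))) := by
    rw [Finset.prod_range_add, ← Finset.prod_range_reflect (fun k => g (1 + (m + k))) m,
      ← Finset.prod_mul_distrib]
  -- key pairing computation
  have key : ∀ k ∈ Finset.range m,
      g (1 + k) * g (1 + (m + (m - 1 - k))) = (-1 : K) ^ (k + 1) * (ζ ^ (k + 1) - 1) ^ ℓ := by
    intro k hk
    rw [Finset.mem_range] at hk
    have e1 : 1 + (m + (m - 1 - k)) = 2 * m - k := by omega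
    have e2 : (1 : ℕ) + k = k + 1 := by omega
    rw [e1, e2]
    obtain ⟨A, hA⟩ : ∃ A, 2 * m - k = A + 1 := ⟨2 * m - k - 1, by omega⟩
    have ha : ℓ - (k + 1) = A + 1 := by omega
    have hd : ℓ - (A + 1) = k + 1 := by omega
    have hL : A + 1 + (k + 1) = ℓ := by omega
    -- the sign flip
    have hone : ζ ^ (A + 1) * ζ ^ (k + 1) = 1 := by
      rw [← pow_add, hL, hz1]
    have hflip : ζ ^ (A + 1) - 1 = -(ζ ^ (A + 1) * (ζ ^ (k + 1) - 1)) := by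
      linear_combination hone
    -- the ζ-exponent identity
    have hs1 := Finset.sum_range_id_mul_two (A + 1)
    have hs2 := Finset.sum_range_id_mul_two (k + 1)
    simp only [Nat.add_sub_cancel] at hs1 hs2
    have hexp : S (A + 1) + S (k + 1) + (A + 1) * (k + 1) = ℓ * m := by
      have hcalc : (S (A + 1) + S (k + 1) + (A + 1) * (k + 1)) * 2 = (ℓ * m) * 2 := by
        calc (S (A + 1) + S (k + 1) + (A + 1) * (k + 1)) * 2
            = S (A + 1) * 2 + S (k + 1) * 2 + 2 * ((A + 1) * (k + 1)) := by ring
          _ = (A + 1) * A + (k + 1) * k + 2 * ((A + 1) * (k + 1)) := by rw [hs1, hs2]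
          _ = (A + 1 + (k + 1)) * (A + 1 + k) := by ring
          _ = ℓ * (2 * m) := by rw [hL]; congr 1; omega
          _ = (ℓ * m) * 2 := by ring
      exact Nat.eq_of_mul_eq_mul_right (by norm_num) hcalc
    calc g (k + 1) * g (2 * m - k)
        = ζ ^ S (A + 1) * (ζ ^ (k + 1) - 1) ^ (A + 1)
          * (ζ ^ S (k + 1) * (ζ ^ (A + 1) - 1) ^ (k + 1)) := by
          rw [hg]; simp only [ha, hA, hd]
      _ = (-1 : K) ^ (k + 1) * (ζ ^ S (A + 1) * ζ ^ S (k + 1) * ζ ^ ((A + 1) * (k + 1)))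
          * ((ζ ^ (k + 1) - 1) ^ (A + 1) * (ζ ^ (k + 1) - 1) ^ (k + 1)) := by
          rw [hflip, neg_pow, mul_pow, ← pow_mul]; ring
      _ = (-1 : K) ^ (k + 1) * ζ ^ (ℓ * m) * (ζ ^ (k + 1) - 1) ^ ℓ := by
          rw [← pow_add, ← pow_add, ← pow_add, hexp, hL]
      _ = (-1 : K) ^ (k + 1) * (ζ ^ (k + 1) - 1) ^ ℓ := by
          rw [pow_mul, hz1, one_pow, mul_one]
  -- assemble the left-hand side
  have hsum : (∑ k ∈ Finset.range m, (k + 1)) * 2 = m * (m - 1) + 2 * m := by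
    rw [Finset.sum_add_distrib, Finset.sum_const, Finset.card_range, smul_eq_mul, mul_one,
      add_mul, Finset.sum_range_id_mul_two]
    ring
  have hlhs : Matrix.det (Matrix.of fun i j : Fin ℓ => ζ ^ ((i : ℕ) * (j : ℕ)))
      = (-1 : K) ^ (∑ k ∈ Finset.range m, (k + 1))
        * (∏ k ∈ Finset.range m, (ζ ^ (k + 1) - 1)) ^ ℓ := by
    rw [h1, h3, Finset.prod_congr rfl h4, h5, Finset.prod_congr rfl fun d _ => h6 d, h7, h8,
      Finset.prod_congr rfl key, Finset.prod_mul_distrib, Finset.prod_pow_eq_pow_sum,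
      Finset.prod_pow]
  rw [hlhs]
  -- now the right-hand side
  have hicc : (∏ i ∈ Finset.Icc 1 ((ℓ - 1) / 2), (ζ ^ i - 1))
      = ∏ k ∈ Finset.range m, (ζ ^ (k + 1) - 1) := by
    rw [show (ℓ - 1) / 2 = m by omega, ← Finset.Ico_add_one_right_eq_Icc, Finset.prod_Ico_eq_prod_range]
    exact Finset.prod_congr rfl fun k _ => by rw [Nat.add_comm 1 k]
  have hsign : (ℓ - 1) * (ℓ + 1) / 8 = ∑ k ∈ Finset.range m, (k + 1) := by
    set t := ∑ k ∈ Finset.range m, (k + 1)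
    have hM : (ℓ - 1) * (ℓ + 1) = 4 * (m * (m - 1) + 2 * m) := by
      obtain ⟨n, rfl⟩ : ∃ n, m = n + 1 := ⟨m - 1, by omega⟩
      rw [hm]
      simp only [Nat.add_sub_cancel]
      ring
    have hQ : (ℓ - 1) * (ℓ + 1) = t * 8 := by
      rw [hM, ← hsum]; ring
    rw [hQ, Nat.mul_div_cancel t (by norm_num)]
  have hsgn : ((-1 : K) ^ (∑ k ∈ Finset.range m, (k + 1))) ^ ℓ
      = (-1 : K) ^ (∑ k ∈ Finset.range m, (k + 1)) := by
    rw [← pow_mul, Nat.mul_comm, pow_mul,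
      show ((-1 : K)) ^ ℓ = -1 from Odd.neg_one_pow ⟨m, by omega⟩]
  rw [hsign, hicc, mul_pow, hsgn]
end

section
/- Let H be a normal subgroup of a finite group H̃ and ℓ a prime. If R is a radical ℓ-subgroup of H, then R̃ := O_ℓ(N_{H̃}(R)) is a radical ℓ-subgroup of H̃ satisfying R̃ ∩ H = R and N_{H̃}(R) = N_{H̃}(R̃). In particular, the map Rad(H̃) → Rad(H), R̃ ↦ R̃ ∩ H, is surjective. -/
/-- `O_ℓ(G)`: the largest normal `ℓ`-subgroup of `G`. -/
def pRadCore (ℓ : ℕ) (G : Type*) [Group G] : Subgroup G :=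
  ⨆ (H : Subgroup G) (_ : H.Normal) (_ : IsPGroup ℓ H), H

/-- `R` is a radical `ℓ`-subgroup of `G`: an `ℓ`-subgroup with `R = O_ℓ(N_G(R))`. -/
def IsRadicalPSubgroup (ℓ : ℕ) {G : Type*} [Group G] (R : Subgroup G) : Prop :=
  IsPGroup ℓ R ∧ R.subgroupOf (Subgroup.normalizer (R : Set G)) = pRadCore ℓ ↥(Subgroup.normalizer (R : Set G))

section helpers

variable {ℓ : ℕ} {G : Type*} [Group G]

lemma le_pRadCore {K : Subgroup G} (h1 : K.Normal) (h2 : IsPGroup ℓ K) :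
    K ≤ pRadCore ℓ G := by
  exact le_iSup_of_le K (le_iSup_of_le h1 (le_iSup_of_le h2 le_rfl))

lemma pRadCore_normal : (pRadCore ℓ G).Normal := by
  constructor
  intro n hn g
  have key : ∀ (φ : G ≃* G), (pRadCore ℓ G).map φ.toMonoidHom ≤ pRadCore ℓ G := by
    intro φ
    rw [pRadCore, Subgroup.map_iSup]
    refine iSup_le fun K => ?_
    rw [Subgroup.map_iSup]
    refine iSup_le fun hK => ?_
    rw [Subgroup.map_iSup]
    refine iSup_le fun hKp => ?_
    exact le_pRadCore (hK.map φ.toMonoidHom φ.surjective) (hKp.map φ.toMonoidHom)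
  exact key (MulAut.conj g) ⟨n, hn, rfl⟩

lemma pRadCore_pGroup [Finite G] : IsPGroup ℓ (pRadCore ℓ G) := by
  haveI : Finite (Subgroup G) :=
    Finite.of_injective (fun K : Subgroup G => (K : Set G)) SetLike.coe_injective
  -- the set of normal ℓ-subgroups
  set s : Set (Subgroup G) := {K | K.Normal ∧ IsPGroup ℓ K} with hs
  obtain ⟨P, hPs, hPmax⟩ := Set.Finite.exists_maximalFor id s (Set.toFinite s)
    ⟨⊥, ⟨inferInstance, IsPGroup.of_bot⟩⟩
  have hle : ∀ K ∈ s, K ≤ P := by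
    intro K hK
    have hsup : K ⊔ P ∈ s := by
      haveI := hPs.1
      haveI := hK.1
      exact ⟨inferInstance, hK.2.to_sup_of_normal_right hPs.2⟩
    have := hPmax (j := K ⊔ P) hsup le_sup_right
    simp only [id] at this
    exact le_trans le_sup_left this
  have heq : pRadCore ℓ G = P := by
    refine le_antisymm ?_ (le_pRadCore hPs.1 hPs.2)
    refine iSup_le fun K => iSup_le fun hK => iSup_le fun hKp => hle K ⟨hK, hKp⟩
  rw [heq]
  exact hPs.2

end helpers

section main

variable {G : Type*} [Group G] [Fintype G]

lemma key_lemma (ℓ : ℕ) (hℓ : ℓ.Prime)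
    (H : Subgroup G) (hH : H.Normal)
    (R : Subgroup G) (hRH : R ≤ H)
    (hrad : IsRadicalPSubgroup ℓ (R.subgroupOf H)) :
    IsRadicalPSubgroup ℓ ((pRadCore ℓ ↥(Subgroup.normalizer (R : Set G))).map (Subgroup.normalizer (R : Set G)).subtype) ∧
      ((pRadCore ℓ ↥(Subgroup.normalizer (R : Set G))).map (Subgroup.normalizer (R : Set G)).subtype) ⊓ H = R ∧
      (Subgroup.normalizer (R : Set G)) = Subgroup.normalizer (((pRadCore ℓ ↥(Subgroup.normalizer (R : Set G))).map (Subgroup.normalizer (R : Set G)).subtype : Subgroup G) : Set G) := by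
  set N := Subgroup.normalizer (R : Set G) with hN
  set Rt := (pRadCore ℓ ↥N).map N.subtype with hRt
  have hRp : IsPGroup ℓ R := hrad.1.of_equiv (Subgroup.subgroupOfEquivOfLe hRH)
  have hRN : R ≤ N := Subgroup.le_normalizer
  have hRtN : Rt ≤ N := Subgroup.map_subtype_le _
  have hRtp : IsPGroup ℓ Rt := (pRadCore_pGroup).map N.subtype
  -- R ≤ Rt
  have hRRt : R ≤ Rt := by
    have h1 : (R.subgroupOf N).Normal := Subgroup.normal_in_normalizer
    have h2 : IsPGroup ℓ (R.subgroupOf N) :=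
      hRp.of_equiv (Subgroup.subgroupOfEquivOfLe hRN).symm
    have h3 : R.subgroupOf N ≤ pRadCore ℓ ↥N := le_pRadCore h1 h2
    have h4 := Subgroup.map_mono (f := N.subtype) h3
    rwa [Subgroup.subgroupOf_map_subtype, inf_eq_left.mpr hRN] at h4
  -- elements of N conjugate Rt into Rt
  have hconj : ∀ g ∈ N, ∀ y ∈ Rt, g * y * g⁻¹ ∈ Rt := by
    intro g hg y hy
    obtain ⟨n, hn, rfl⟩ := hy
    haveI : (pRadCore ℓ ↥N).Normal := pRadCore_normal
    exact ⟨⟨g, hg⟩ * n * ⟨g, hg⟩⁻¹, this.conj_mem n hn ⟨g, hg⟩, rfl⟩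
  -- the normalizer of R.subgroupOf H inside H
  have hM : Subgroup.normalizer ((R.subgroupOf H : Subgroup H) : Set H) = N.subgroupOf H := by
    ext x
    simp only [Subgroup.mem_normalizer_iff, Subgroup.mem_subgroupOf, hN]
    constructor
    · intro hx
      intro g
      by_cases hgH : g ∈ H
      · simpa using hx ⟨g, hgH⟩
      · constructor
        · intro hgR; exact absurd (hRH hgR) hgH
        · intro hgR
          have : (x : G) * g * (x : G)⁻¹ ∈ H := hRH hgR
          have : g ∈ H := by
            have h2 : (x:G)⁻¹ * ((x : G) * g * (x : G)⁻¹) * (x:G) ∈ H := by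
              have := hH.conj_mem _ this (x : G)⁻¹
              simpa [mul_assoc] using this
            simpa [mul_assoc] using h2
          exact absurd this hgH
    · intro hx h
      simpa using hx (h : G)
  -- intersection
  have hcap : Rt ⊓ H = R := by
    refine le_antisymm ?_ (le_inf hRRt hRH)
    set K := Rt ⊓ H with hK
    have hKH : K ≤ H := inf_le_right
    have hKN : K ≤ N := le_trans inf_le_left hRtN
    have hKM : K.subgroupOf H ≤ Subgroup.normalizer ((R.subgroupOf H : Subgroup H) : Set H) := by
      rw [hM]
      exact Subgroup.comap_mono hKN
    set M := Subgroup.normalizer ((R.subgroupOf H : Subgroup H) : Set H) with hMdef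
    have hLnormal : ((K.subgroupOf H).subgroupOf M).Normal := by
      constructor
      rintro ⟨⟨k, hkH⟩, hkM⟩ hk ⟨⟨m, hmH⟩, hmM⟩
      have hkK : k ∈ K := by
        simpa [Subgroup.mem_subgroupOf] using hk
      have hmN : m ∈ N := by
        rw [hM] at hmM
        simpa [Subgroup.mem_subgroupOf] using hmM
      simp only [Subgroup.mem_subgroupOf]
      show m * k * m⁻¹ ∈ K
      obtain ⟨hk1, hk2⟩ := Subgroup.mem_inf.mp hkK
      exact Subgroup.mem_inf.mpr ⟨hconj m hmN k hk1, hH.conj_mem k hk2 m⟩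
    have hLp : IsPGroup ℓ ((K.subgroupOf H).subgroupOf M) := by
      have h1 : IsPGroup ℓ K := hRtp.to_le inf_le_left
      have h2 : IsPGroup ℓ (K.subgroupOf H) :=
        h1.of_equiv (Subgroup.subgroupOfEquivOfLe hKH).symm
      exact h2.comap_of_injective M.subtype Subtype.coe_injective
    have hLle : (K.subgroupOf H).subgroupOf M ≤ (R.subgroupOf H).subgroupOf M := by
      rw [hrad.2]
      exact le_pRadCore hLnormal hLp
    have h5 := Subgroup.map_mono (f := M.subtype) hLle
    rw [Subgroup.subgroupOf_map_subtype, Subgroup.subgroupOf_map_subtype,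
      inf_eq_left.mpr hKM] at h5
    have h6 : K.subgroupOf H ≤ R.subgroupOf H := le_trans h5 inf_le_left
    have h7 := Subgroup.map_mono (f := H.subtype) h6
    rw [Subgroup.subgroupOf_map_subtype, Subgroup.subgroupOf_map_subtype,
      inf_eq_left.mpr hKH, inf_eq_left.mpr hRH] at h7
    exact h7
  -- normalizer equality
  have hnorm : N = Subgroup.normalizer (Rt : Set G) := by
    ext g
    constructor
    · intro hg
      rw [Subgroup.mem_normalizer_iff]
      intro y
      constructor
      · exact fun hy => hconj g hg y hy
      · intro hy
        have := hconj g⁻¹ (inv_mem hg) _ hy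
        simpa [mul_assoc] using this
    · intro hg
      rw [hN, Subgroup.mem_normalizer_iff]
      intro y
      rw [← hcap]
      have h1 := Subgroup.mem_normalizer_iff.mp hg y
      constructor
      · rintro ⟨hy1, hy2⟩
        exact ⟨h1.mp hy1, hH.conj_mem y hy2 g⟩
      · rintro ⟨hy1, hy2⟩
        refine ⟨h1.mpr hy1, ?_⟩
        have := hH.conj_mem _ hy2 g⁻¹
        simpa [mul_assoc] using this
  refine ⟨⟨hRtp, ?_⟩, hcap, hnorm⟩
  rw [← hnorm]
  show Rt.comap N.subtype = pRadCore ℓ ↥N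
  rw [hRt, Subgroup.comap_map_eq_self_of_injective N.subtype_injective]

end main

/-- Let `H ⊴ H̃` be finite groups and `ℓ` a prime.  If `R` is a radical
`ℓ`-subgroup of `H`, then `R̃ := O_ℓ(N_{H̃}(R))` is a radical `ℓ`-subgroup of `H̃` with
`R̃ ∩ H = R` and `N_{H̃}(R) = N_{H̃}(R̃)`.  In particular the map `Rad(H̃) → Rad(H)`,
`R̃ ↦ R̃ ∩ H`, is surjective. -/
theorem stmt11 {G : Type*} [Group G] [Fintype G] (ℓ : ℕ) (hℓ : ℓ.Prime)
    (H : Subgroup G) (hH : H.Normal)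
    (R : Subgroup G) (hRH : R ≤ H)
    (hrad : IsRadicalPSubgroup ℓ (R.subgroupOf H)) :
    (IsRadicalPSubgroup ℓ ((pRadCore ℓ ↥(Subgroup.normalizer (R : Set G))).map (Subgroup.normalizer (R : Set G)).subtype) ∧
      ((pRadCore ℓ ↥(Subgroup.normalizer (R : Set G))).map (Subgroup.normalizer (R : Set G)).subtype) ⊓ H = R ∧
      (Subgroup.normalizer (R : Set G)) = Subgroup.normalizer (((pRadCore ℓ ↥(Subgroup.normalizer (R : Set G))).map (Subgroup.normalizer (R : Set G)).subtype : Subgroup G) : Set G)) ∧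
    (∀ S : Subgroup G, S ≤ H → IsRadicalPSubgroup ℓ (S.subgroupOf H) →
      ∃ T : Subgroup G, IsRadicalPSubgroup ℓ T ∧ T ⊓ H = S) := by
  refine ⟨key_lemma ℓ hℓ H hH R hRH hrad, fun S hSH hSrad => ?_⟩
  obtain ⟨h1, h2, _⟩ := key_lemma ℓ hℓ H hH S hSH hSrad
  exact ⟨_, h1, h2⟩
end

section
/- Let X be a finite group with normal subgroups Y ≤ H ≤ X. Let χ ∈ Irr(X) and let ξ ∈ Irr(Y) be a constituent of the restriction of χ to Y. If Res^X_Y(χ) is multiplicity-free, then there is exactly one irreducible character of H that lies below χ and above ξ; that is, |Irr(H | χ) ∩ Irr(H | ξ)| = 1. -/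
open CategoryTheory
open scoped Classical

noncomputable section
namespace Stmt14Aux
open FDRep Module
variable {G : Type} [Group G]

def Inv (V : FDRep ℂ G) (p : Submodule ℂ V) : Prop := ∀ g : G, Set.MapsTo (V.ρ g) p p

def subRep (V : FDRep ℂ G) (p : Submodule ℂ V) (hp : Inv V p) : FDRep ℂ G :=
  FDRep.of (G := G) {
    toFun := fun g => (V.ρ g).restrict (hp g)
    map_one' := by ext x; simp [LinearMap.restrict_apply]
    map_mul' := by intro g h; ext x; simp [LinearMap.restrict_apply]; rfl }




lemma subRep_char (V : FDRep ℂ G) (p : Submodule ℂ V) (hp : Inv V p) (g : G) :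
    (subRep V p hp).character g = LinearMap.trace ℂ p ((V.ρ g).restrict (hp g)) := rfl

lemma char_isCompl (V : FDRep ℂ G) {p q : Submodule ℂ V} (hp : Inv V p) (hq : Inv V q)
    (h : IsCompl p q) (g : G) :
    V.character g = (subRep V p hp).character g + (subRep V q hq).character g := by
  classical
  set N : Bool → Submodule ℂ V := fun b => Bool.rec q p b with hN
  have hint : DirectSum.IsInternal N := by
    rw [DirectSum.isInternal_submodule_iff_isCompl N (i := true) (j := false) (by simp)
      (by ext b; cases b <;> simp)]
    exact h
  have hmap : ∀ b, Set.MapsTo (V.ρ g) (N b) (N b) := by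
    intro b; cases b
    · exact hq g
    · exact hp g
  have htr := LinearMap.trace_eq_sum_trace_restrict hint hmap
  rw [Fintype.sum_bool] at htr
  exact htr

lemma exists_invariant_compl [Fintype G] (V : FDRep ℂ G) (p : Submodule ℂ V) (hp : Inv V p) :
    ∃ q : Submodule ℂ V, Inv V q ∧ IsCompl p q := by
  obtain ⟨q₀, hq₀⟩ := Submodule.exists_isCompl p
  set π₀ : V →ₗ[ℂ] V := p.subtype ∘ₗ (p.linearProjOfIsCompl q₀ hq₀) with hπ₀
  have hπ₀mem : ∀ x : V, π₀ x ∈ p := fun x => (p.linearProjOfIsCompl q₀ hq₀ x).2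
  have hπ₀id : ∀ x ∈ p, π₀ x = x := by
    intro x hx
    simp [hπ₀]
    exact congrArg Subtype.val (Submodule.projectionOnto_apply_left hq₀ ⟨x, hx⟩)
  set c : ℂ := (Fintype.card G : ℂ)⁻¹ with hc
  have hcard : (Fintype.card G : ℂ) ≠ 0 := by
    exact_mod_cast Nat.cast_ne_zero.mpr Fintype.card_ne_zero
  set T : V →ₗ[ℂ] V := c • ∑ g : G, (V.ρ g⁻¹) ∘ₗ π₀ ∘ₗ (V.ρ g) with hT
  have hTapp : ∀ x : V, T x = c • ∑ g : G, (V.ρ g⁻¹) (π₀ ((V.ρ g) x)) := by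
    intro x; simp [hT, LinearMap.sum_apply]
  have hTmem : ∀ x : V, T x ∈ p := by
    intro x
    rw [hTapp]
    exact Submodule.smul_mem _ _ (Submodule.sum_mem _ fun g _ => hp g⁻¹ (hπ₀mem _))
  have hρρ : ∀ (g : G) (x : V), (V.ρ g⁻¹) ((V.ρ g) x) = x := by
    intro g x
    rw [← Module.End.mul_apply, ← map_mul, inv_mul_cancel, map_one, Module.End.one_apply]
  have hTid : ∀ x ∈ p, T x = x := by
    intro x hx
    rw [hTapp]
    have : ∀ g : G, (V.ρ g⁻¹) (π₀ ((V.ρ g) x)) = x := by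
      intro g
      rw [hπ₀id _ (hp g hx), hρρ]
    simp only [this, Finset.sum_const, Finset.card_univ, ← Nat.cast_smul_eq_nsmul ℂ]
    rw [smul_smul, hc, inv_mul_cancel₀ hcard, one_smul]
  have hTequi : ∀ (h : G) (x : V), T ((V.ρ h) x) = (V.ρ h) (T x) := by
    intro h x
    rw [hTapp, hTapp, map_smul]
    congr 1
    rw [map_sum]
    refine Fintype.sum_equiv (Equiv.mulRight h) _ _ ?_
    intro g
    have h1 : (V.ρ (g*h)) x = (V.ρ g) ((V.ρ h) x) := by rw [map_mul]; rfl
    have h2 : ∀ z, (V.ρ h) ((V.ρ ((g*h)⁻¹)) z) = (V.ρ g⁻¹) z := by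
      intro z; rw [← Module.End.mul_apply, ← map_mul]
      congr 2
      group
    simp only [Equiv.coe_mulRight]
    rw [← h1, h2]
  refine ⟨LinearMap.ker T, ?_, ?_⟩
  · intro g x hx
    have hx' : T x = 0 := hx
    have : T ((V.ρ g) x) = 0 := by rw [hTequi, hx', map_zero]
    exact this
  · constructor
    · rw [disjoint_iff_inf_le]
      rintro x ⟨hxp, hxk⟩
      have : T x = 0 := hxk
      rw [hTid x hxp] at this
      simpa using this
    · rw [codisjoint_iff_le_sup]
      intro x _
      refine Submodule.mem_sup.mpr ⟨T x, hTmem x, x - T x, ?_, by abel⟩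
      have : T (x - T x) = 0 := by
        rw [map_sub, hTid (T x) (hTmem x), sub_self]
      exact this



-- the inclusion morphism
def subRepHom (V : FDRep ℂ G) (p : Submodule ℂ V) (hp : Inv V p) : subRep V p hp ⟶ V where
  hom := FGModuleCat.ofHom p.subtype
  comm := by intro g; ext x; rfl

lemma simple_of (V : FDRep ℂ G) (hV : Module.finrank ℂ V ≠ 0)
    (htriv : ∀ p : Submodule ℂ V, Inv V p → p = ⊥ ∨ p = ⊤) : Simple V := by
  constructor
  intro W f hfmono
  constructor
  · intro hiso h0
    have hfh : f.hom = 0 := by rw [h0]; rfl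
    have h3 : (inv f).hom ≫ f.hom = 𝟙 V.V := by
      rw [← Action.comp_hom, IsIso.inv_hom_id]
      rfl
    have h2 : ∀ v : V, v = 0 := by
      intro v
      have h5 : f.hom ((inv f).hom v) = v := LinearMap.congr_fun (congrArg (fun φ => φ.hom.hom) h3) v
      rw [hfh] at h5
      exact h5.symm
    exact hV (by
      rw [Module.finrank_zero_iff.mpr ⟨fun a b => (h2 a).trans (h2 b).symm⟩])
  · intro hne
    have hker : LinearMap.ker f.hom.hom.hom = ⊥ := by
      set K := LinearMap.ker f.hom.hom.hom with hK
      have hKinv : Inv W K := by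
        intro g x hx
        have hx' : f.hom x = 0 := hx
        have : f.hom ((W.ρ g) x) = (V.ρ g) (f.hom x) := LinearMap.congr_fun (congrArg (fun φ => φ.hom.hom) (f.comm g)) x
        simp only [hx', map_zero] at this
        exact this
      set j : subRep W K hKinv ⟶ W := subRepHom W K hKinv with hj
      have hjf : j ≫ f = (0 : subRep W K hKinv ⟶ W) ≫ f := by
        ext x
        show f.hom (K.subtype x) = f.hom ((0 : (subRep W K hKinv).V →ₗ[ℂ] W.V) x)
        have := x.2
        simp
        exact this
      have hj0 : j = 0 := (cancel_mono f).mp hjf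
      rw [eq_bot_iff]
      intro x hx
      have h6 : (subRepHom W K hKinv).hom.hom.hom = (0 : subRep W K hKinv ⟶ W).hom.hom.hom :=
        congrArg (fun φ => φ.hom.hom.hom) hj0
      have h7 := LinearMap.congr_fun h6 ⟨x, hx⟩
      exact h7
    have hrange : LinearMap.range f.hom.hom.hom = ⊤ := by
      have hrinv : Inv V (LinearMap.range f.hom.hom.hom) := by
        rintro g x ⟨w, rfl⟩
        exact ⟨(W.ρ g) w, (LinearMap.congr_fun (congrArg (fun φ => φ.hom.hom) (f.comm g)) w).symm ▸ rfl⟩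
      rcases htriv _ hrinv with h | h
      · exfalso
        apply hne
        ext x
        have : f.hom x ∈ LinearMap.range f.hom.hom.hom := ⟨x, rfl⟩
        rw [h] at this
        simp at this
        exact this
      · exact h
    have hbij : Function.Bijective f.hom :=
      ⟨LinearMap.ker_eq_bot.mp hker, LinearMap.range_eq_top.mp hrange⟩
    set e : W.V ≃ₗ[ℂ] V.V := LinearEquiv.ofBijective f.hom.hom.hom hbij with he
    have hcomm' : ∀ (g : G) (v : V), e.symm ((V.ρ g) v) = (W.ρ g) (e.symm v) := by
      intro g v
      apply e.injective
      rw [e.apply_symm_apply]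
      exact (calc e ((W.ρ g) (e.symm v)) = f.hom ((W.ρ g) (e.symm v)) := rfl
        _ = (V.ρ g) (f.hom (e.symm v)) := LinearMap.congr_fun (congrArg (fun φ => φ.hom.hom) (f.comm g)) _
        _ = (V.ρ g) (e (e.symm v)) := rfl
        _ = (V.ρ g) v := by rw [e.apply_symm_apply]).symm
    set ginv : V ⟶ W := ⟨FGModuleCat.ofHom (e.symm : V.V →ₗ[ℂ] W.V), by
      intro g
      ext v
      exact hcomm' g v⟩ with hginv
    refine ⟨⟨ginv, ?_, ?_⟩⟩
    · ext w
      show e.symm (f.hom w) = w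
      exact e.symm_apply_apply w
    · ext v
      show f.hom (e.symm v) = v
      exact e.apply_symm_apply v


lemma conj_char [Fintype G] (V : FDRep ℂ G) (g : G) :
    (starRingEnd ℂ) (V.character g) = V.character g⁻¹ := by
  classical
  set n := Fintype.card G with hn
  have hn0 : n ≠ 0 := Fintype.card_ne_zero
  set f : Module.End ℂ V := V.ρ g with hf
  set f' : Module.End ℂ V := V.ρ g⁻¹ with hf'
  have hf'f : f' * f = 1 := by rw [hf, hf', ← map_mul, inv_mul_cancel, map_one]
  have hff' : f * f' = 1 := by rw [hf, hf', ← map_mul, mul_inv_cancel, map_one]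
  have hcomm : Commute f f' := by rw [Commute, SemiconjBy, hff', hf'f]
  have hfn : f ^ n = 1 := by rw [hf, ← map_pow, pow_card_eq_one, map_one]
  set N : ℂ → Submodule ℂ V := fun μ => f.maxGenEigenspace μ with hN
  have hμ1 : ∀ μ : ℂ, N μ ≠ ⊥ → μ ^ n = 1 := by
    intro μ hμ
    have hev : f.HasEigenvalue μ := by
      apply Module.End.hasEigenvalue_of_hasGenEigenvalue (k := finrank ℂ V)
      rw [Module.End.HasGenEigenvalue, Module.End.HasUnifEigenvalue,
        ← Module.End.maxGenEigenspace_eq_genEigenspace_finrank]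
      exact hμ
    obtain ⟨v, hv⟩ := hev.exists_hasEigenvector
    have hpow : (f ^ n) v = μ ^ n • v := Module.End.HasEigenvector.pow_apply hv n
    rw [hfn] at hpow
    have h0 : (μ ^ n - 1) • v = 0 := by
      rw [sub_smul, one_smul, ← hpow, Module.End.one_apply, sub_self]
    rcases smul_eq_zero.mp h0 with h | h
    · exact sub_eq_zero.mp h
    · exact absurd h hv.2
  have hμne : ∀ μ : ℂ, N μ ≠ ⊥ → μ ≠ 0 := by
    intro μ hμ h0
    have := hμ1 μ hμ
    rw [h0, zero_pow hn0] at this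
    exact zero_ne_one this
  have hind := f.independent_maxGenEigenspace
  have htop := Module.End.iSup_maxGenEigenspace_eq_top f
  have hds := DirectSum.isInternal_submodule_of_iSupIndep_of_iSup_eq_top hind htop
  have hfin : {μ : ℂ | N μ ≠ ⊥}.Finite := WellFoundedGT.finite_ne_bot_of_iSupIndep hind
  have hmapsf : ∀ μ : ℂ, Set.MapsTo f (N μ) (N μ) :=
    fun μ => Module.End.mapsTo_maxGenEigenspace_of_comm rfl μ
  have hmapsf' : ∀ μ : ℂ, Set.MapsTo f' (N μ) (N μ) :=
    fun μ => Module.End.mapsTo_maxGenEigenspace_of_comm hcomm μ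
  have ht1 := LinearMap.trace_eq_sum_trace_restrict' hds hfin hmapsf
  have ht2 := LinearMap.trace_eq_sum_trace_restrict' hds hfin hmapsf'
  -- compute each summand
  have key1 : ∀ μ ∈ hfin.toFinset,
      LinearMap.trace ℂ (N μ) (f.restrict (hmapsf μ)) = μ * (finrank ℂ (N μ) : ℂ) := by
    intro μ _
    have hnil : IsNilpotent (f.restrict (hmapsf μ) - algebraMap ℂ _ μ) := by
      have := Module.End.isNilpotent_restrict_maxGenEigenspace_sub_algebraMap f μ
      convert this using 1
      ext; simp [LinearMap.restrict_apply]; rfl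
    have := LinearMap.trace_comp_eq_mul_of_commute_of_isNilpotent μ
      (Commute.one_left (f.restrict (hmapsf μ))) hnil
    simpa [LinearMap.trace_id, Module.End.one_eq_id, LinearMap.id_comp] using this
  have key2 : ∀ μ ∈ hfin.toFinset,
      LinearMap.trace ℂ (N μ) (f'.restrict (hmapsf' μ)) = μ⁻¹ * (finrank ℂ (N μ) : ℂ) := by
    intro μ hμmem
    have hμb : N μ ≠ ⊥ := by simpa using hμmem
    have hμ0 : μ ≠ 0 := hμne μ hμb
    set A := f.restrict (hmapsf μ) with hA
    set B := f'.restrict (hmapsf' μ) with hB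
    have hBA : B * A = 1 := by
      ext x
      have hx : f' (f x.1) = x.1 := by rw [← Module.End.mul_apply, hf'f, Module.End.one_apply]
      simp [hA, hB, Module.End.mul_apply, LinearMap.restrict_apply, hx]
      exact Subtype.ext hx
    have hc : Commute A B := LinearMap.restrict_commute hcomm _ _
    have hAB : A * B = 1 := hc.eq.symm ▸ hBA
    have hAnil : IsNilpotent (A - algebraMap ℂ _ μ) := by
      have := Module.End.isNilpotent_restrict_maxGenEigenspace_sub_algebraMap f μ
      convert this using 1
      ext; simp [LinearMap.restrict_apply]; rfl
    have hcommAB : Commute (A - algebraMap ℂ _ μ) B :=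
      hc.sub_left (Algebra.commute_algebraMap_left μ B)
    have hnilB : IsNilpotent (B - algebraMap ℂ _ μ⁻¹) := by
      have heq : B - algebraMap ℂ _ μ⁻¹ = (-μ⁻¹) • ((A - algebraMap ℂ _ μ) * B) := by
        have expand : (A - algebraMap ℂ _ μ) * B = 1 - μ • B := by
          rw [sub_mul, hAB, Algebra.algebraMap_eq_smul_one, smul_mul_assoc, one_mul]
        rw [expand, Algebra.algebraMap_eq_smul_one]
        match_scalars
        · field_simp
        · field_simp
      rw [heq]
      exact (hcommAB.isNilpotent_mul_right hAnil).smul _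
    have := LinearMap.trace_comp_eq_mul_of_commute_of_isNilpotent μ⁻¹
      (Commute.one_left B) hnilB
    simpa [LinearMap.trace_id, Module.End.one_eq_id, LinearMap.id_comp] using this
  rw [Finset.sum_congr rfl key1] at ht1
  rw [Finset.sum_congr rfl key2] at ht2
  have hchar1 : V.character g = ∑ μ ∈ hfin.toFinset, μ * (finrank ℂ (N μ) : ℂ) := ht1
  have hchar2 : V.character g⁻¹ = ∑ μ ∈ hfin.toFinset, μ⁻¹ * (finrank ℂ (N μ) : ℂ) := ht2
  rw [hchar1, hchar2, map_sum]
  refine Finset.sum_congr rfl ?_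
  intro μ hμmem
  have hμb : N μ ≠ ⊥ := by simpa using hμmem
  have hμn := hμ1 μ hμb
  have habs : ‖μ‖ = 1 := Complex.norm_eq_one_of_pow_eq_one hμn hn0
  have hconj : (starRingEnd ℂ) μ = μ⁻¹ := (Complex.inv_eq_conj habs).symm
  rw [map_mul, hconj]
  congr 1
  exact Complex.conj_natCast _
lemma char_decomp [Fintype G] (V : FDRep ℂ G) :
    ∃ L : List (FDRep ℂ G), (∀ W ∈ L, Simple W) ∧
      ∀ g : G, V.character g = (L.map (fun W => W.character g)).sum := by
  suffices h : ∀ (n : ℕ) (V : FDRep ℂ G), finrank ℂ V = n →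
      ∃ L : List (FDRep ℂ G), (∀ W ∈ L, Simple W) ∧
        ∀ g : G, V.character g = (L.map (fun W => W.character g)).sum from h _ V rfl
  intro n
  induction n using Nat.strong_induction_on with
  | _ n IH =>
    intro V hn
    by_cases h0 : finrank ℂ V = 0
    · refine ⟨[], by simp, fun g => ?_⟩
      haveI : Subsingleton V := Module.finrank_zero_iff.mp h0
      have hz : V.ρ g = 0 := Subsingleton.elim _ _
      simp [FDRep.character, hz]
    by_cases hs : ∃ p : Submodule ℂ V, Inv V p ∧ p ≠ ⊥ ∧ p ≠ ⊤
    · obtain ⟨p, hp, hpb, hpt⟩ := hs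
      obtain ⟨q, hq, hcompl⟩ := exists_invariant_compl V p hp
      have hqt : q ≠ ⊤ := by
        intro h
        apply hpb
        have hd := hcompl.disjoint
        rw [h, disjoint_top] at hd
        exact hd
      have hfp : finrank ℂ (subRep V p hp) < n := by
        rw [← hn]
        exact Submodule.finrank_lt hpt
      have hfq : finrank ℂ (subRep V q hq) < n := by
        rw [← hn]
        exact Submodule.finrank_lt hqt
      obtain ⟨L1, hL1s, hL1c⟩ := IH _ hfp (subRep V p hp) rfl
      obtain ⟨L2, hL2s, hL2c⟩ := IH _ hfq (subRep V q hq) rfl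
      refine ⟨L1 ++ L2, ?_, fun g => ?_⟩
      · intro W hW
        rcases List.mem_append.mp hW with h | h
        exacts [hL1s W h, hL2s W h]
      · rw [char_isCompl V hp hq hcompl g, hL1c g, hL2c g, List.map_append, List.sum_append]
    · push_neg at hs
      haveI : Simple V := simple_of V h0 (fun p hp => or_iff_not_imp_left.mpr (hs p hp))
      refine ⟨[V], ?_, fun g => by simp⟩
      intro W hW
      rw [List.mem_singleton] at hW
      subst hW
      infer_instance

/-- restriction of a representation along a group hom -/
def res {G' : Type} [Group G'] (φ : G' →* G) (V : FDRep ℂ G) : FDRep ℂ G' :=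
  FDRep.of (V.ρ.comp φ)

lemma res_char {G' : Type} [Group G'] (φ : G' →* G) (V : FDRep ℂ G) (g' : G') :
    (res φ V).character g' = V.character (φ g') := rfl

lemma conj_orth [Fintype G] (S T : FDRep ℂ G) [Simple S] [Simple T] :
    ∑ g : G, S.character g * (starRingEnd ℂ) (T.character g)
      = if S.character = T.character then (Fintype.card G : ℂ) else 0 := by
  letI hft : Fintype G := ‹Fintype G›
  letI : Invertible ((Nat.card G : ℂ)) :=
    invertibleOfNonzero (Nat.cast_ne_zero.mpr Nat.card_pos.ne')
  have key := FDRep.char_orthonormal (k := ℂ) (G := G) S T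
  rw [inv_mul_eq_iff_eq_mul₀ (Nat.cast_ne_zero.mpr Nat.card_pos.ne'), Nat.card_eq_fintype_card,
    ← smul_eq_mul] at key
  have key' : ∑ g : G, S.character g * T.character g⁻¹
      = (Fintype.card G : ℂ) • (if Nonempty (S ≅ T) then (1:ℂ) else 0) := key
  have hsum : ∑ g : G, S.character g * (starRingEnd ℂ) (T.character g)
      = ∑ g : G, S.character g * T.character g⁻¹ := by
    refine Finset.sum_congr rfl fun g _ => ?_
    rw [conj_char]
  rw [hsum]
  by_cases hiso : Nonempty (S ≅ T)
  · have hc : S.character = T.character := FDRep.char_iso hiso.some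
    rw [if_pos hc, key']
    simp [hiso]
  · have h1 : ∑ g : G, S.character g * T.character g⁻¹ = 0 := by
      rw [key']
      simp [hiso]
    by_cases hc : S.character = T.character
    · exfalso
      have key2 := FDRep.char_orthonormal (k := ℂ) (G := G) S S
      rw [inv_mul_eq_iff_eq_mul₀ (Nat.cast_ne_zero.mpr Nat.card_pos.ne'), Nat.card_eq_fintype_card,
        ← smul_eq_mul] at key2
      have key2' : ∑ g : G, S.character g * S.character g⁻¹
          = (Fintype.card G : ℂ) • (if Nonempty (S ≅ S) then (1:ℂ) else 0) := key2
      rw [if_pos ⟨Iso.refl S⟩, smul_eq_mul, mul_one] at key2'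
      have h2 : ∑ g : G, S.character g * S.character g⁻¹ = 0 := by
        rw [← h1]
        exact Finset.sum_congr rfl (fun g _ => by rw [hc])
      exact (Nat.cast_ne_zero.mpr Fintype.card_ne_zero) (key2'.symm.trans h2)
    · rw [h1, if_neg hc]

lemma sum_char_list [Fintype G] (L : List (FDRep ℂ G)) (hL : ∀ W ∈ L, Simple W)
    (S : FDRep ℂ G) [Simple S] :
    ∑ g : G, (L.map (fun W => W.character g)).sum * (starRingEnd ℂ) (S.character g)
      = ((L.countP (fun W => decide (W.character = S.character)) : ℕ) : ℂ)
          * (Fintype.card G : ℂ) := by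
  induction L with
  | nil => simp
  | cons W t ih =>
    haveI : Simple W := hL W (List.mem_cons_self)
    simp only [List.map_cons, List.sum_cons, add_mul, Finset.sum_add_distrib]
    rw [conj_orth W S, ih (fun w hw => hL w (List.mem_cons_of_mem _ hw))]
    rw [List.countP_cons]
    by_cases hc : W.character = S.character
    · simp only [hc, if_pos, decide_eq_true_eq, if_true]
      push_cast
      ring
    · simp only [hc, decide_eq_true_eq, if_false]
      simp [hc]
lemma list_sum_swap {β : Type*} {α : Type} [Fintype α] (L : List β) (f : β → α → ℂ) :
    ∑ a : α, (L.map (fun b => f b a)).sum = (L.map (fun b => ∑ a : α, f b a)).sum := by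
  induction L with
  | nil => simp
  | cons b t ih => simp [Finset.sum_add_distrib, ih]

lemma list_sum_mul_right {β : Type*} (L : List β) (f : β → ℂ) (r : ℂ) :
    (L.map (fun b => f b * r)).sum = (L.map f).sum * r := by
  induction L with
  | nil => simp
  | cons b t ih => simp [ih, add_mul]

end Stmt14Aux
end

/-- `f` is an irreducible complex character of the group `H`. -/
def IsIrrChar (H : Type) [Group H] (f : H → ℂ) : Prop :=
  ∃ V : FDRep ℂ H, Simple V ∧ f = V.character

/-- Let `X` be a finite group with normal subgroups `Y ≤ H ≤ X`, let
`χ ∈ Irr(X)` and let `ξ ∈ Irr(Y)` be a constituent of `Res^X_Y χ`.  If `Res^X_Y χ` is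
multiplicity free, then there is exactly one irreducible character of `H` lying below `χ`
and above `ξ`.  Constituency is expressed via nonvanishing of the relevant inner products
of characters, and multiplicity freeness via all multiplicities being `0` or `1`. -/
theorem stmt14 {X : Type} [Group X] [Fintype X]
    (Y H : Subgroup X) (hY : Y.Normal) (hH : H.Normal) (hYH : Y ≤ H)
    (χ : X → ℂ) (hχ : IsIrrChar X χ)
    (ξ : ↥Y → ℂ) (hξ : IsIrrChar ↥Y ξ)
    (hconst : ∑ y : ↥Y, χ (y : X) * (starRingEnd ℂ) (ξ y) ≠ 0)
    (hmf : ∀ g : ↥Y → ℂ, IsIrrChar ↥Y g →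
      (∑ y : ↥Y, χ (y : X) * (starRingEnd ℂ) (g y)) = 0 ∨
      (∑ y : ↥Y, χ (y : X) * (starRingEnd ℂ) (g y)) = (Nat.card ↥Y : ℂ)) :
    ∃! f : ↥H → ℂ, IsIrrChar ↥H f ∧
      (∑ h : ↥H, χ (h : X) * (starRingEnd ℂ) (f h)) ≠ 0 ∧
      (∑ y : ↥Y, f (Subgroup.inclusion hYH y) * (starRingEnd ℂ) (ξ y)) ≠ 0 := by
  classical
  obtain ⟨V, hVs, rfl⟩ := hχ
  obtain ⟨Ξ, hΞs, rfl⟩ := hξ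
  haveI := hVs
  haveI := hΞs
  have hY0 : (Nat.card ↥Y : ℂ) ≠ 0 := by
    rw [Nat.card_eq_fintype_card]
    exact_mod_cast Fintype.card_ne_zero
  have hH0 : (Fintype.card ↥H : ℂ) ≠ 0 := Nat.cast_ne_zero.mpr Fintype.card_ne_zero
  obtain ⟨L, hLs, hLc⟩ := Stmt14Aux.char_decomp (Stmt14Aux.res H.subtype V)
  have hLc' : ∀ h : ↥H, V.character (h : X) = (L.map (fun W => W.character h)).sum :=
    fun h => hLc h
  set cxi : FDRep ℂ ↥H → ℂ :=
    fun W => ∑ y : ↥Y, W.character (Subgroup.inclusion hYH y) * (starRingEnd ℂ) (Ξ.character y)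
    with hcxi
  have hclaimA : ∀ W : FDRep ℂ ↥H, ∃ nW : ℕ, cxi W = (nW : ℂ) * (Nat.card ↥Y : ℂ) := by
    intro W
    obtain ⟨M, hMs, hMc⟩ := Stmt14Aux.char_decomp (Stmt14Aux.res (Subgroup.inclusion hYH) W)
    refine ⟨M.countP (fun W' => decide (W'.character = Ξ.character)), ?_⟩
    have h1 : cxi W = ∑ y : ↥Y,
        (M.map (fun W' => W'.character y)).sum * (starRingEnd ℂ) (Ξ.character y) := by
      refine Finset.sum_congr rfl fun y _ => ?_
      rw [show W.character (Subgroup.inclusion hYH y)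
        = (M.map (fun W' => W'.character y)).sum from hMc y]
    rw [h1, Stmt14Aux.sum_char_list M hMs Ξ, Nat.card_eq_fintype_card]
  choose n hn using hclaimA
  -- claim B
  have hB : (∑ y : ↥Y, V.character (y : X) * (starRingEnd ℂ) (Ξ.character y))
      = (L.map (fun W => cxi W)).sum := by
    have h1 : ∀ y : ↥Y, V.character (y : X) * (starRingEnd ℂ) (Ξ.character y)
        = (L.map (fun W => W.character (Subgroup.inclusion hYH y)
            * (starRingEnd ℂ) (Ξ.character y))).sum := by
      intro y
      rw [show ((y : X)) = ((Subgroup.inclusion hYH y : ↥H) : X) from rfl,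
        hLc' (Subgroup.inclusion hYH y), Stmt14Aux.list_sum_mul_right]
    rw [Finset.sum_congr rfl (fun y _ => h1 y)]
    exact Stmt14Aux.list_sum_swap L _
  have hm : (∑ y : ↥Y, V.character (y : X) * (starRingEnd ℂ) (Ξ.character y))
      = (Nat.card ↥Y : ℂ) := by
    rcases hmf Ξ.character ⟨Ξ, hΞs, rfl⟩ with h | h
    · exact absurd h hconst
    · exact h
  have hsum1 : (L.map (fun W => (n W : ℂ) * (Nat.card ↥Y : ℂ))).sum = (Nat.card ↥Y : ℂ) := by
    have h6 := hB.symm.trans hm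
    rw [show L.map (fun W => cxi W) = L.map (fun W => (n W : ℂ) * (Nat.card ↥Y : ℂ)) from
      List.map_congr_left (fun W _ => hn W)] at h6
    exact h6
  have hcastsum : (L.map n).sum = 1 := by
    have h3 : (L.map (fun W => (n W : ℂ))).sum * (Nat.card ↥Y : ℂ)
        = 1 * (Nat.card ↥Y : ℂ) := by
      rw [← Stmt14Aux.list_sum_mul_right, one_mul]
      exact hsum1
    have h4 := mul_right_cancel₀ hY0 h3
    have h5 : (((L.map n).sum : ℕ) : ℂ) = (L.map (fun W => (n W : ℂ))).sum := by
      rw [Nat.cast_list_sum, List.map_map]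
      rfl
    exact_mod_cast h5.trans h4
  have hex : ∃ θ₀ ∈ L, n θ₀ ≠ 0 := by
    by_contra hno
    push_neg at hno
    have : (L.map n).sum = 0 := List.sum_eq_zero (by
      intro x hx
      obtain ⟨W, hW, rfl⟩ := List.mem_map.mp hx
      exact hno W hW)
    omega
  obtain ⟨θ₀, hθ₀L, hθ₀n⟩ := hex
  haveI : Simple θ₀ := hLs θ₀ hθ₀L
  -- generic inner product computation with χ over H
  have hinner : ∀ (U : FDRep ℂ ↥H) [Simple U],
      ∑ h : ↥H, V.character (h : X) * (starRingEnd ℂ) (U.character h)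
      = ((L.countP (fun W => decide (W.character = U.character)) : ℕ) : ℂ)
          * (Fintype.card ↥H : ℂ) := by
    intro U hU
    rw [← Stmt14Aux.sum_char_list L hLs U]
    exact Finset.sum_congr rfl fun h _ => by rw [hLc' h]
  refine ⟨θ₀.character, ⟨⟨θ₀, hLs θ₀ hθ₀L, rfl⟩, ?_, ?_⟩, ?_⟩
  · rw [hinner θ₀]
    have hcount : 0 < L.countP (fun W => decide (W.character = θ₀.character)) :=
      List.countP_pos_iff.mpr ⟨θ₀, hθ₀L, by simp⟩
    exact mul_ne_zero (Nat.cast_ne_zero.mpr hcount.ne') hH0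
  · show cxi θ₀ ≠ 0
    rw [hn θ₀]
    exact mul_ne_zero (Nat.cast_ne_zero.mpr hθ₀n) hY0
  · rintro f ⟨⟨U, hUs, rfl⟩, ha, hb⟩
    haveI := hUs
    rw [hinner U] at ha
    have hcount : L.countP (fun W => decide (W.character = U.character)) ≠ 0 := by
      intro h
      rw [h] at ha
      simp at ha
    obtain ⟨θ, hθL, hθc⟩ : ∃ W ∈ L, W.character = U.character := by
      have := List.countP_pos_iff.mp (Nat.pos_of_ne_zero hcount)
      simpa using this
    have hbθ : cxi θ ≠ 0 := by
      have heq : cxi θ = ∑ y : ↥Y,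
          U.character (Subgroup.inclusion hYH y) * (starRingEnd ℂ) (Ξ.character y) :=
        Finset.sum_congr rfl fun y _ => by rw [hθc]
      rw [heq]
      exact hb
    have hnθ : n θ ≠ 0 := fun h => hbθ (by rw [hn θ, h]; simp)
    by_contra hne
    have hθne : θ₀ ≠ θ := by
      intro h
      exact hne (by rw [← hθc, ← h])
    have hperm : L.Perm (θ :: L.erase θ) := List.perm_cons_erase hθL
    have hsum2 : (L.map n).sum = n θ + ((L.erase θ).map n).sum := by
      rw [(hperm.map n).sum_eq]
      simp
    have hθ₀e : θ₀ ∈ L.erase θ := (List.mem_erase_of_ne hθne).mpr hθ₀L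
    have hle : n θ₀ ≤ ((L.erase θ).map n).sum :=
      List.single_le_sum (fun x _ => Nat.zero_le x) _ (List.mem_map_of_mem (f := n) hθ₀e)
    omega
end

section
/- Let A = XY be a finite group with X ⊴ A and Z := X ∩ Y ⊆ Z(X). Suppose χ ∈ Irr(X) is A-invariant, ζ ∈ Irr(Y) is a linear character, and Irr(Z | χ) = Irr(Z | ζ) (i.e., χ and ζ lie over the same character of Z). If χ̃ ∈ Irr(X ⋊ (Y/Z)) is an extension of χ, then the function χ̃·ζ on A defined by (χ̃·ζ)(xy) = χ̃(x, yZ)·ζ(y) for x ∈ X, y ∈ Y is a well-defined irreducible character of A extending χ. -/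
set_option maxHeartbeats 1600000


open CategoryTheory
open scoped Classical

lemma descendRep {P Q M : Type} [Group P] [Group Q] [AddCommGroup M] [Module ℂ M]
    (e : P →* Q) (he : Function.Surjective e) (σ : P → (M →ₗ[ℂ] M))
    (σ1 : σ 1 = 1)
    (σmul : ∀ p p', σ (p * p') = σ p * σ p')
    (σwd : ∀ p p', e p = e p' → σ p = σ p') :
    ∃ ρ : Representation ℂ Q M, ∀ p, ρ (e p) = σ p := by
  refine ⟨{ toFun := fun q => σ (Function.surjInv he q), map_one' := ?_, map_mul' := ?_ }, ?_⟩
  · show σ _ = 1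
    rw [σwd _ 1 (by rw [Function.surjInv_eq he, map_one]), σ1]
  · intro q₁ q₂
    show σ _ = σ _ * σ _
    rw [σwd (Function.surjInv he (q₁ * q₂)) (Function.surjInv he q₁ * Function.surjInv he q₂)
        (by rw [map_mul, Function.surjInv_eq he, Function.surjInv_eq he, Function.surjInv_eq he]),
      σmul]
  · intro p
    exact σwd _ p (Function.surjInv_eq he (e p))


def conjEquiv {A : Type} [Group A] (X Y : Subgroup A) [hXn : X.Normal] (y : ↥Y) :
    ↥(X ⊓ Y) ≃ ↥(X ⊓ Y) where
  toFun z := ⟨(y : A) * (z : A) * (y : A)⁻¹,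
    ⟨hXn.conj_mem _ z.2.1 _, Y.mul_mem (Y.mul_mem y.2 z.2.2) (Y.inv_mem y.2)⟩⟩
  invFun z := ⟨(y : A)⁻¹ * (z : A) * (y : A), by
    have := hXn.conj_mem (z : A) z.2.1 (y : A)⁻¹
    simp only [inv_inv] at this
    exact ⟨this, Y.mul_mem (Y.mul_mem (Y.inv_mem y.2) z.2.2) y.2⟩⟩
  left_inv z := by ext; simp [mul_assoc]
  right_inv z := by ext; simp [mul_assoc]

@[simp] lemma conjEquiv_coe {A : Type} [Group A] (X Y : Subgroup A) [hXn : X.Normal]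
    (y : ↥Y) (z : ↥(X ⊓ Y)) :
    ((conjEquiv X Y y z : ↥(X ⊓ Y)) : A) = (y : A) * (z : A) * (y : A)⁻¹ := rfl

/-- Let `A = XY` be a finite group with `X ⊴ A` and
`Z := X ∩ Y ⊆ Z(X)`.  Suppose `χ ∈ Irr(X)` is `A`-invariant, `ζ ∈ Irr(Y)` is linear, and
`χ`, `ζ` lie over the same character of `Z`.  If `χ̃` is an extension of `χ` to
`X ⋊ (Y/Z)`, then `(χ̃·ζ)(xy) = χ̃(x, yZ)·ζ(y)` is a well-defined irreducible character
of `A` extending `χ`. -/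
theorem stmt16 {A : Type} [Group A] [Fintype A]
    (X Y : Subgroup A) [hXn : X.Normal]
    (hA : X ⊔ Y = ⊤)
    (hZ : ∀ z ∈ X ⊓ Y, ∀ x ∈ X, z * x = x * z)
    [hN : ((X ⊓ Y).subgroupOf Y).Normal]
    (χ : ↥X → ℂ) (hχ : IsIrrChar ↥X χ)
    (hinv : ∀ (a : A) (x : ↥X) (h : a * (x : A) * a⁻¹ ∈ X),
      χ ⟨a * (x : A) * a⁻¹, h⟩ = χ x)
    (ζ : ↥Y → ℂ) (hζ1 : ζ 1 = 1) (hζm : ∀ y₁ y₂ : ↥Y, ζ (y₁ * y₂) = ζ y₁ * ζ y₂)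
    (hsame : ∀ (z : A) (hzX : z ∈ X) (hzY : z ∈ Y),
      χ ⟨z, hzX⟩ = χ 1 * ζ ⟨z, hzY⟩)
    -- the conjugation action of `Y/Z` on `X`:
    (φbar : (↥Y ⧸ (X ⊓ Y).subgroupOf Y) →* MulAut ↥X)
    (hφbar : ∀ y : ↥Y,
      φbar ((QuotientGroup.mk y : ↥Y ⧸ (X ⊓ Y).subgroupOf Y)) = MulAut.conjNormal (y : A))
    -- the extension `χ̃` of `χ` to `X ⋊ (Y/Z)`:
    (V : FDRep ℂ (SemidirectProduct ↥X (↥Y ⧸ (X ⊓ Y).subgroupOf Y) φbar)) (hV : Simple V)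
    (hext : ∀ x : ↥X, V.character (SemidirectProduct.inl x) = χ x) :
    ∃ F : A → ℂ, IsIrrChar A F ∧
      (∀ (x : ↥X) (y : ↥Y), F ((x : A) * (y : A)) =
        V.character (SemidirectProduct.inl x *
          SemidirectProduct.inr (QuotientGroup.mk y : ↥Y ⧸ (X ⊓ Y).subgroupOf Y)) * ζ y) ∧
      (∀ x : ↥X, F (x : A) = χ x) := by
  classical
  -- basic facts about ζ
  have hζu : ∀ y : ↥Y, ζ y ≠ 0 := by
    intro y h0
    have h := hζm y y⁻¹
    rw [mul_inv_cancel, hζ1, h0, zero_mul] at h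
    exact one_ne_zero h
  have hζi : ∀ y : ↥Y, ζ y⁻¹ = (ζ y)⁻¹ := by
    intro y
    have h := hζm y⁻¹ y
    rw [inv_mul_cancel, hζ1] at h
    exact eq_inv_of_mul_eq_one_left h.symm
  -- χ 1 ≠ 0
  obtain ⟨V', hV', hχV'⟩ := hχ
  have hnontriv : ∀ {H : Type} [Group H] (W : FDRep ℂ H), Simple W → Nontrivial W := by
    intro H _ W hW
    by_contra hns
    rw [not_nontrivial_iff_subsingleton] at hns
    haveI := hW
    exact id_nonzero W (Action.hom_ext _ _ (by
      ext v; exact @Subsingleton.elim _ hns _ _))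
  have hχ1 : χ 1 ≠ 0 := by
    rw [hχV', FDRep.char_one]
    have := hnontriv V' hV'
    simp only [ne_eq, Nat.cast_eq_zero]
    exact Module.finrank_pos.ne'
  -- the semidirect product P = X ⋊ Y with the conjugation action
  set φ : ↥Y →* MulAut ↥X := MulAut.conjNormal.comp Y.subtype with hφdef
  have hφ : ∀ (y : ↥Y) (x : ↥X), ((φ y x : ↥X) : A) = y * x * (y : A)⁻¹ := by
    intro y x; simp [hφdef]
  set P := SemidirectProduct ↥X ↥Y φ with hPdef
  set π : P →* A := SemidirectProduct.lift X.subtype Y.subtype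
    (by
      intro y; ext x
      simp [hφ, MulAut.conj_apply]) with hπdef
  have hπmk : ∀ (x : ↥X) (y : ↥Y), π ⟨x, y⟩ = (x : A) * (y : A) := by
    intro x y
    rw [hπdef, SemidirectProduct.mk_eq_inl_mul_inr, map_mul, SemidirectProduct.lift_inl,
      SemidirectProduct.lift_inr]
    rfl
  have hπs : Function.Surjective π := by
    intro a
    have ha : a ∈ (↑(X ⊔ Y) : Set A) := by rw [hA]; trivial
    rw [Subgroup.normal_mul] at ha
    obtain ⟨x, hx, y, hy, hxy⟩ := ha
    exact ⟨⟨⟨x, hx⟩, ⟨y, hy⟩⟩, by rw [hπmk]; exact hxy⟩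
  set q : P →* SemidirectProduct ↥X (↥Y ⧸ (X ⊓ Y).subgroupOf Y) φbar :=
    SemidirectProduct.map (MonoidHom.id ↥X) (QuotientGroup.mk' ((X ⊓ Y).subgroupOf Y))
      (by
        intro y; ext x
        simp [hφbar y, hφ]) with hqdef
  have hqmk : ∀ (x : ↥X) (y : ↥Y), q ⟨x, y⟩ =
      ⟨x, (QuotientGroup.mk y : ↥Y ⧸ (X ⊓ Y).subgroupOf Y)⟩ := by
    intro x y; rfl
  have hqs : Function.Surjective q := by
    intro g
    obtain ⟨y, hy⟩ := QuotientGroup.mk'_surjective ((X ⊓ Y).subgroupOf Y) g.right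
    exact ⟨⟨g.left, y⟩, by
      rw [hqmk]
      ext
      · rfl
      · exact hy⟩
  -- inclusions of X ⊓ Y into X and Y
  set zX : ↥(X ⊓ Y) → ↥X := fun z => ⟨z.1, z.2.1⟩ with hzXdef
  set zY : ↥(X ⊓ Y) → ↥Y := fun z => ⟨z.1, z.2.2⟩ with hzYdef
  have hmemconj : ∀ (a : A), a ∈ Y → ∀ z : ↥(X ⊓ Y), a * (z : A) * a⁻¹ ∈ X ⊓ Y := by
    intro a ha z
    exact ⟨hXn.conj_mem _ z.2.1 _, Y.mul_mem (Y.mul_mem ha z.2.2) (Y.inv_mem ha)⟩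
  have hζconj : ∀ (y : ↥Y) (z : ↥(X ⊓ Y)),
      ζ ⟨(y : A) * (z : A) * (y : A)⁻¹, (hmemconj y y.2 z).2⟩ = ζ (zY z) := by
    intro y z
    have h1 : ((y : A) * (z : A) * (y : A)⁻¹) ∈ X := (hmemconj y y.2 z).1
    have h2 := hinv (y : A) (zX z) h1
    rw [hsame _ h1 (hmemconj y y.2 z).2] at h2
    rw [hsame _ z.2.1 z.2.2] at h2
    exact mul_left_cancel₀ hχ1 h2
  -- the averaging operator
  set T : ↥V →ₗ[ℂ] ↥V :=
    ∑ z : ↥(X ⊓ Y), (ζ (zY z))⁻¹ • V.ρ (SemidirectProduct.inl (zX z)) with hTdef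
  have hTinl : ∀ x : ↥X,
      V.ρ (SemidirectProduct.inl x) * T = T * V.ρ (SemidirectProduct.inl x) := by
    intro x
    rw [hTdef, Finset.mul_sum, Finset.sum_mul]
    refine Finset.sum_congr rfl fun z _ => ?_
    rw [mul_smul_comm, smul_mul_assoc, ← map_mul, ← map_mul, ← map_mul, ← map_mul]
    rw [show x * zX z = zX z * x from Subtype.ext (hZ _ z.2 _ x.2).symm]
  have hTinr : ∀ c, V.ρ (SemidirectProduct.inr c) * T = T * V.ρ (SemidirectProduct.inr c) := by
    intro c
    refine QuotientGroup.induction_on c fun y => ?_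
    rw [hTdef, Finset.mul_sum, Finset.sum_mul]
    refine Fintype.sum_equiv (conjEquiv X Y y) _ _ fun z => ?_
    rw [mul_smul_comm, smul_mul_assoc, ← map_mul, ← map_mul]
    have hcom : SemidirectProduct.inr (φ := φbar) (QuotientGroup.mk y) * SemidirectProduct.inl (zX z)
        = SemidirectProduct.inl (zX (conjEquiv X Y y z)) *
          SemidirectProduct.inr (φ := φbar) (QuotientGroup.mk y) := by
      have h1 : φbar (QuotientGroup.mk y) (zX z) = zX (conjEquiv X Y y z) := by
        rw [hφbar]
        exact Subtype.ext (by simp [MulAut.conjNormal_apply]; rfl)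
      rw [← h1, SemidirectProduct.inl_aut, mul_assoc, ← map_mul, inv_mul_cancel, map_one,
        mul_one]
    rw [hcom, show ζ (zY (conjEquiv X Y y z)) = ζ (zY z) from hζconj y z]
  have hTg : ∀ g, V.ρ g * T = T * V.ρ g := by
    intro g
    conv_lhs => rw [← SemidirectProduct.inl_left_mul_inr_right g]
    conv_rhs => rw [← SemidirectProduct.inl_left_mul_inr_right g]
    rw [map_mul, mul_assoc, hTinr, ← mul_assoc, hTinl, mul_assoc]
  haveI := hV
  obtain ⟨cT, hcT⟩ := CategoryTheory.endomorphism_simple_eq_smul_id ℂ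
    (X := V) (Action.Hom.mk (FGModuleCat.ofHom T) (fun g => by ext v; exact LinearMap.congr_fun (hTg g).symm v))
  have hT' : cT • (1 : ↥V →ₗ[ℂ] ↥V) = T := by
    ext v; have h := congrArg (fun f : V ⟶ V => f.hom.hom v) hcT; exact h
  have htr1 : ∀ z : ↥(X ⊓ Y),
      LinearMap.trace ℂ _ ((ζ (zY z))⁻¹ • V.ρ (SemidirectProduct.inl (zX z))) = χ 1 := by
    intro z
    rw [map_smul, show LinearMap.trace ℂ _ (V.ρ (SemidirectProduct.inl (zX z))) = χ (zX z)
      from hext (zX z), show χ (zX z) = χ 1 * ζ (zY z) from hsame _ z.2.1 z.2.2, smul_eq_mul]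
    field_simp [hζu (zY z)]
  have htrT : LinearMap.trace ℂ _ T = (Fintype.card ↥(X ⊓ Y) : ℂ) * χ 1 := by
    rw [hTdef, map_sum, Finset.sum_congr rfl (fun z _ => htr1 z), Finset.sum_const,
      Finset.card_univ, nsmul_eq_mul]
  have hcT0 : cT ≠ 0 := by
    intro h0
    have heq : cT * (Module.finrank ℂ ↥V : ℂ) = (Fintype.card ↥(X ⊓ Y) : ℂ) * χ 1 := by
      rw [← htrT, ← hT', map_smul, LinearMap.trace_one, smul_eq_mul]
    rw [h0, zero_mul] at heq
    exact mul_ne_zero (Nat.cast_ne_zero.mpr Fintype.card_ne_zero) hχ1 heq.symm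
  have hscal : ∀ z : ↥(X ⊓ Y),
      V.ρ (SemidirectProduct.inl (zX z)) = ζ (zY z) • (1 : ↥V →ₗ[ℂ] ↥V) := by
    intro z0
    have key : V.ρ (SemidirectProduct.inl (zX z0)) * T = ζ (zY z0) • T := by
      rw [hTdef, Finset.mul_sum, Finset.smul_sum]
      refine Fintype.sum_equiv (Equiv.mulLeft z0) _ _ fun z => ?_
      simp only [Equiv.coe_mulLeft]
      rw [mul_smul_comm, ← map_mul, ← map_mul]
      have h1 : zX z0 * zX z = zX (z0 * z) := rfl
      have h2 : ζ (zY (z0 * z)) = ζ (zY z0) * ζ (zY z) := by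
        rw [show zY (z0 * z) = zY z0 * zY z from rfl, hζm]
      rw [h1, smul_smul, h2]
      congr 1
      rw [mul_inv, ← mul_assoc, mul_inv_cancel₀ (hζu (zY z0)), one_mul]
    rw [← hT', mul_smul_comm, mul_one, smul_comm (ζ (zY z0)) cT] at key
    exact smul_right_injective _ hcT0 key
  -- the representation of A
  set σA : P → (↥V →ₗ[ℂ] ↥V) := fun p => ζ p.right • V.ρ (q p) with hσAdef
  have hσA1 : σA 1 = 1 := by
    show ζ ((1 : P).right) • V.ρ (q 1) = 1
    rw [show ((1 : P).right) = 1 from rfl, hζ1, map_one, map_one, one_smul]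
  have hσAmul : ∀ p p', σA (p * p') = σA p * σA p' := by
    intro p p'
    show ζ ((p * p').right) • V.ρ (q (p * p')) = (ζ p.right • V.ρ (q p)) * (ζ p'.right • V.ρ (q p'))
    rw [show (p * p').right = p.right * p'.right from rfl, hζm, map_mul, map_mul]
    exact (smul_mul_smul_comm (ζ p.right) (V.ρ (q p)) (ζ p'.right) (V.ρ (q p'))).symm
  have hscal' : ∀ (u : ↥X) (hu : (u : A) ∈ Y),
      V.ρ (SemidirectProduct.inl u) = ζ ⟨(u : A), hu⟩ • (1 : ↥V →ₗ[ℂ] ↥V) := by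
    intro u hu
    have h := hscal ⟨(u : A), ⟨u.2, hu⟩⟩
    rw [show zX ⟨(u : A), ⟨u.2, hu⟩⟩ = u from Subtype.ext rfl] at h
    exact h
  have hker : ∀ kp : P, π kp = 1 → σA kp = 1 := by
    intro kp hkp
    have h1 : (kp.left : A) * (kp.right : A) = 1 := by rw [← hπmk kp.left kp.right]; exact hkp
    have hr : ((kp.right : ↥Y) : A) ∈ X ⊓ Y := by
      refine ⟨?_, kp.right.2⟩
      rw [eq_inv_of_mul_eq_one_right h1]
      exact X.inv_mem kp.left.2
    have hqkp : q kp = SemidirectProduct.inl kp.left := by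
      have : (QuotientGroup.mk (kp.right) : ↥Y ⧸ (X ⊓ Y).subgroupOf Y) = 1 := by
        rw [QuotientGroup.eq_one_iff]
        exact Subgroup.mem_subgroupOf.mpr hr
      rw [hqmk kp.left kp.right, this]
      ext <;> rfl
    have hlY : ((kp.left : ↥X) : A) ∈ Y := by
      rw [eq_inv_of_mul_eq_one_left h1]
      exact Y.inv_mem kp.right.2
    show ζ kp.right • V.ρ (q kp) = 1
    rw [hqkp, hscal' kp.left hlY]
    rw [show (⟨((kp.left : ↥X) : A), hlY⟩ : ↥Y) = kp.right⁻¹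
      from Subtype.ext (eq_inv_of_mul_eq_one_left h1)]
    rw [hζi, smul_smul, mul_inv_cancel₀ (hζu kp.right), one_smul]
  have hσAwd : ∀ p p', π p = π p' → σA p = σA p' := by
    intro p p' h
    have hk : π (p⁻¹ * p') = 1 := by rw [map_mul, map_inv, h, inv_mul_cancel]
    calc σA p = σA p * σA (p⁻¹ * p') := by rw [hker _ hk, mul_one]
    _ = σA (p * (p⁻¹ * p')) := (hσAmul _ _).symm
    _ = σA p' := by rw [mul_inv_cancel_left]
  obtain ⟨ρA, hρA⟩ := descendRep π hπs σA hσA1 hσAmul hσAwd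
  set FA : FDRep ℂ A := FDRep.of ρA with hFAdef
  have hFAρ : ∀ a, FA.ρ a = ρA a := fun a => rfl
  have hFAchar : ∀ p : P, FA.character (π p)
      = ζ p.right * LinearMap.trace ℂ _ (V.ρ (q p)) := by
    intro p
    show LinearMap.trace ℂ _ (FA.ρ (π p)) = _
    rw [hFAρ, hρA, hσAdef, map_smul, smul_eq_mul]
  have hchar2 : ∀ (x : ↥X) (y : ↥Y), FA.character ((x : A) * (y : A)) =
      V.character (SemidirectProduct.inl x *
        SemidirectProduct.inr (QuotientGroup.mk y : ↥Y ⧸ (X ⊓ Y).subgroupOf Y)) * ζ y := by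
    intro x y
    rw [← hπmk x y, hFAchar ⟨x, y⟩]
    rw [show q ⟨x, y⟩ = SemidirectProduct.inl x *
      SemidirectProduct.inr (QuotientGroup.mk y : ↥Y ⧸ (X ⊓ Y).subgroupOf Y) by
        rw [hqmk x y, SemidirectProduct.mk_eq_inl_mul_inr]]
    exact mul_comm _ _
  have hchar3 : ∀ x : ↥X, FA.character (x : A) = χ x := by
    intro x
    have h1 : ((x : A)) = (x : A) * ((1 : ↥Y) : A) := by rw [OneMemClass.coe_one, mul_one]
    rw [h1, ← hπmk x 1, hFAchar ⟨x, 1⟩]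
    rw [show q ⟨x, (1 : ↥Y)⟩ = SemidirectProduct.inl x from by
      rw [hqmk x 1]; ext <;> simp]
    rw [hζ1, one_mul]
    exact hext x
  -- the subgroup Z acts by the scalar ζ in FA
  have hVnt : Nontrivial ↥V := hnontriv V hV
  have hFAz : ∀ z : ↥(X ⊓ Y), FA.ρ ((z : A)) = ζ (zY z) • (1 : ↥V →ₗ[ℂ] ↥V) := by
    intro z
    have h1 : π ⟨1, zY z⟩ = (z : A) := by rw [hπmk]; simp; rfl
    have h2 : FA.ρ (π ⟨1, zY z⟩) = ζ (zY z) • (1 : ↥V →ₗ[ℂ] ↥V) := by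
      rw [hFAρ, hρA]
      show ζ (zY z) • V.ρ (q ⟨1, zY z⟩) = _
      rw [show q ⟨(1 : ↥X), zY z⟩ = 1 from by
        rw [hqmk]
        ext
        · rfl
        · show (QuotientGroup.mk (zY z) : ↥Y ⧸ (X ⊓ Y).subgroupOf Y) = 1
          rw [QuotientGroup.eq_one_iff]
          exact Subgroup.mem_subgroupOf.mpr z.2]
      rw [map_one]
    rw [h1] at h2
    exact h2
  -- FA is simple
  haveI := hV
  haveI hSimpleFA : Simple FA := by
    refine ⟨fun {W} f hMono => ⟨fun hIso h0 => ?_, fun hne => ?_⟩⟩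
    · -- if f is iso then f ≠ 0
      haveI := hIso
      have hid : (𝟙 FA : FA ⟶ FA) = 0 := by
        calc (𝟙 FA : FA ⟶ FA) = inv f ≫ f := (IsIso.inv_hom_id f).symm
        _ = inv f ≫ 0 := congrArg (CategoryStruct.comp (inv f)) h0
        _ = 0 := Limits.comp_zero
      have hid2 : (LinearMap.id : ↥V →ₗ[ℂ] ↥V) = 0 := by
        ext v; have := congrArg (fun f : FA ⟶ FA => f.hom.hom v) hid
        exact this
      obtain ⟨v, hv⟩ := exists_ne (0 : ↥V)
      exact hv (by calc v = LinearMap.id v := rfl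
        _ = (0 : ↥V →ₗ[ℂ] ↥V) v := by rw [hid2]
        _ = 0 := rfl)
    · -- if f ≠ 0 then f is iso
      haveI := hMono
      have hinj : Function.Injective f.hom := by
        have h2 : Mono ((forget₂ (FGModuleCat ℂ) (ModuleCat ℂ)).map
            ((Action.forget _ _).map f)) := by infer_instance
        exact (ModuleCat.mono_iff_injective _).1 h2
      -- Z acts by ζ on W as well
      have hWz : ∀ (z : ↥(X ⊓ Y)) (v : ↥W), W.ρ ((z : A)) v = ζ (zY z) • v := by
        intro z v
        apply hinj
        have hc := ConcreteCategory.congr_hom (f.comm ((z : A))) v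
        simp only [comp_apply] at hc
        have hc2 : f.hom ((W.ρ ((z : A))) v) = (FA.ρ ((z : A))) (f.hom v) := hc
        rw [hc2, hFAz z, map_smul]
        rfl
      -- descend W to a representation of the semidirect product
      set σW : P → (↥W →ₗ[ℂ] ↥W) :=
        fun p => (ζ p.right)⁻¹ • W.ρ (π p) with hσWdef
      have hσW1 : σW 1 = 1 := by
        show (ζ ((1 : P).right))⁻¹ • W.ρ (π 1) = 1
        rw [show ((1 : P).right) = 1 from rfl, hζ1, inv_one, map_one, map_one, one_smul]
      have hσWmul : ∀ p p', σW (p * p') = σW p * σW p' := by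
        intro p p'
        show (ζ ((p * p').right))⁻¹ • W.ρ (π (p * p'))
          = ((ζ p.right)⁻¹ • W.ρ (π p)) * ((ζ p'.right)⁻¹ • W.ρ (π p'))
        rw [show (p * p').right = p.right * p'.right from rfl, hζm, map_mul, map_mul, mul_inv]
        exact (smul_mul_smul_comm _ _ _ _).symm
      have hkerW : ∀ kp : P, q kp = 1 → σW kp = 1 := by
        intro kp hkp
        have hl : kp.left = 1 := by
          have := congrArg SemidirectProduct.left hkp
          exact this
        have hrq : (QuotientGroup.mk kp.right : ↥Y ⧸ (X ⊓ Y).subgroupOf Y) = 1 := by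
          have := congrArg SemidirectProduct.right hkp
          exact this
        have hrr : ((kp.right : ↥Y) : A) ∈ X ⊓ Y :=
          Subgroup.mem_subgroupOf.mp ((QuotientGroup.eq_one_iff _).mp hrq)
        have hπkp : π kp = ((kp.right : ↥Y) : A) := by
          calc π kp = (kp.left : A) * (kp.right : A) := hπmk kp.left kp.right
          _ = ((kp.right : ↥Y) : A) := by rw [hl, OneMemClass.coe_one, one_mul]
        apply LinearMap.ext
        intro v
        show (ζ kp.right)⁻¹ • W.ρ (π kp) v = v
        rw [hπkp, hWz ⟨((kp.right : ↥Y) : A), hrr⟩ v]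
        rw [show zY ⟨((kp.right : ↥Y) : A), hrr⟩ = kp.right from Subtype.ext rfl]
        rw [smul_smul, inv_mul_cancel₀ (hζu kp.right), one_smul]
      have hσWwd : ∀ p p', q p = q p' → σW p = σW p' := by
        intro p p' h
        have hk : q (p⁻¹ * p') = 1 := by rw [map_mul, map_inv, h, inv_mul_cancel]
        calc σW p = σW p * σW (p⁻¹ * p') := by rw [hkerW _ hk, mul_one]
        _ = σW (p * (p⁻¹ * p')) := (hσWmul _ _).symm
        _ = σW p' := by rw [mul_inv_cancel_left]
      obtain ⟨ρW, hρW⟩ := descendRep q hqs σW hσW1 hσWmul hσWwd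
      set WG : FDRep ℂ (SemidirectProduct ↥X (↥Y ⧸ (X ⊓ Y).subgroupOf Y) φbar) :=
        FDRep.of ρW with hWGdef
      have hfGcomm : ∀ g, Action.ρ WG g ≫ f.hom = f.hom ≫ Action.ρ V g := by
        intro g
        obtain ⟨p, rfl⟩ := hqs g
        ext v
        show f.hom (ρW (q p) v) = V.ρ (q p) (f.hom v)
        rw [hρW]
        show f.hom (((ζ p.right)⁻¹ • W.ρ (π p)) v) = V.ρ (q p) (f.hom v)
        rw [LinearMap.smul_apply, map_smul]
        have hc := ConcreteCategory.congr_hom (f.comm (π p)) v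
        simp only [comp_apply] at hc
        have hc2 : f.hom ((W.ρ (π p)) v) = (FA.ρ (π p)) (f.hom v) := hc
        rw [hc2, hFAρ, hρA]
        show (ζ p.right)⁻¹ • (ζ p.right • V.ρ (q p)) (f.hom v) = _
        rw [LinearMap.smul_apply, smul_smul, inv_mul_cancel₀ (hζu p.right), one_smul]
      set fG : WG ⟶ V := Action.Hom.mk f.hom hfGcomm with hfGdef
      have hfGmono : Mono fG := by
        apply (Action.forget _ _).mono_of_mono_map
        show Mono ((Action.forget _ _).map fG)
        exact ConcreteCategory.mono_of_injective _ hinj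
      have hfG0 : fG ≠ 0 := by
        intro h
        apply hne
        apply Action.hom_ext
        rw [Action.zero_hom]
        have h2 := congrArg Action.Hom.hom h
        rw [Action.zero_hom] at h2
        exact h2
      haveI := hfGmono
      haveI hfGiso : IsIso fG := isIso_of_mono_of_nonzero hfG0
      haveI : IsIso fG.hom := by
        have h3 : IsIso ((Action.forget _ _).map fG) := inferInstance
        exact h3
      haveI : IsIso f.hom := by
        show IsIso fG.hom
        infer_instance
      exact Action.isIso_of_hom_isIso f
  exact ⟨FA.character, ⟨FA, hSimpleFA, rfl⟩, hchar2, hchar3⟩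
end

section
/- Fix a prime ℓ and a positive integer m with a := ν_ℓ(m). For 0 ≤ γ, let U_m(γ) be the set of partitions μ of m such that ν_ℓ(gcd of the parts of the transposed partition μ′) = γ, and let p(k) denote the number of partitions of k. Then |U_m(γ)| = p(m/ℓ^γ) − p(m/ℓ^{γ+1}) for 0 ≤ γ < a, |U_m(a)| = p(m/ℓ^a), and |U_m(γ)| = 0 for γ > a. -/
/-- The gcd of the parts of the transposed (conjugate) partition `μ′` of `μ ⊢ m`:
the `j`-th part of `μ′` is the number of parts of `μ` that are `≥ j`. -/
def conjGcd {m : ℕ} (μ : Nat.Partition m) : ℕ :=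
  Finset.gcd (Finset.Icc 1 m) fun j => (μ.parts.filter fun v => j ≤ v).card

lemma sum_nsmul_multiset (n : ℕ) (s : Multiset ℕ) : (n • s).sum = n * s.sum := by
  induction n with
  | zero => simp
  | succ k ih => rw [succ_nsmul, Multiset.sum_add, ih, add_mul, one_mul]

/-- splitting a conjugate part -/
lemma conj_part_split {m : ℕ} (μ : Nat.Partition m) (j : ℕ) :
    (μ.parts.filter fun v => j ≤ v).card
      = μ.parts.count j + (μ.parts.filter fun v => j + 1 ≤ v).card := by
  classical
  have h := Multiset.filter_add_filter (fun v => j = v) (fun v => j + 1 ≤ v) μ.parts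
  have h1 : (Multiset.filter (fun v => j = v ∨ j + 1 ≤ v) μ.parts)
      = Multiset.filter (fun v => j ≤ v) μ.parts := by
    apply Multiset.filter_congr
    intro x _
    constructor
    · rintro (h2 | h2) <;> omega
    · intro h2; omega
  have h2 : (Multiset.filter (fun v => j = v ∧ j + 1 ≤ v) μ.parts) = 0 := by
    rw [Multiset.filter_eq_nil]
    rintro x _ ⟨h3, h4⟩; omega
  have hcount : Multiset.count j μ.parts = (Multiset.filter (fun v => j = v) μ.parts).card := by
    rw [Multiset.count, Multiset.countP_eq_card_filter]
  have := congrArg Multiset.card h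
  rw [Multiset.card_add, Multiset.card_add, h1, h2] at this
  simp only [Multiset.card_zero, add_zero] at this
  rw [hcount, ← this, add_comm]

/-- parts of a partition of `m` are at most `m` -/
lemma part_le {m : ℕ} (μ : Nat.Partition m) {v : ℕ} (hv : v ∈ μ.parts) : v ≤ m := by
  conv_rhs => rw [← μ.parts_sum]
  exact Multiset.le_sum_of_mem hv

/-- The key characterization: `d ∣ conjGcd μ` iff `μ.parts = d • u` for some multiset. -/
lemma dvd_conjGcd_iff {m d : ℕ} (hd : d ≠ 0) (hm : 0 < m) (μ : Nat.Partition m) :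
    d ∣ conjGcd μ ↔ ∃ u : Multiset ℕ, μ.parts = d • u := by
  constructor
  · intro h
    have hdvd : ∀ j, d ∣ (μ.parts.filter fun v => j ≤ v).card := by
      intro j
      rcases le_or_gt j m with hj | hj
      · rcases Nat.eq_zero_or_pos j with rfl | hj1
        · have e0 : (μ.parts.filter fun v => 0 ≤ v) = μ.parts := by
            rw [Multiset.filter_eq_self]; intro x _; omega
          have e1 : (μ.parts.filter fun v => 1 ≤ v) = μ.parts := by
            rw [Multiset.filter_eq_self]; intro x hx; exact μ.parts_pos hx
          have h1 := h.trans (Finset.gcd_dvd (f := fun j => (μ.parts.filter fun v => j ≤ v).card)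
            (Finset.mem_Icc.mpr ⟨le_refl 1, hm⟩))
          simp only [e1] at h1
          rw [e0]
          exact h1
        · exact h.trans (Finset.gcd_dvd (Finset.mem_Icc.mpr ⟨hj1, hj⟩))
      · have : (μ.parts.filter fun v => j ≤ v) = 0 := by
          rw [Multiset.filter_eq_nil]
          intro x hx hjx
          exact absurd (part_le μ hx) (by omega)
        rw [this]; simp
    apply Multiset.exists_smul_of_dvd_count
    intro a ha
    have h1 := hdvd a
    have h2 := hdvd (a + 1)
    rw [conj_part_split μ a] at h1
    have h3 := Nat.dvd_sub h1 h2
    simpa using h3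
  · rintro ⟨u, hu⟩
    apply Finset.dvd_gcd
    intro j hj
    rw [hu, Multiset.filter_nsmul, Multiset.card_nsmul]
    exact Dvd.intro _ rfl

/-- scaling a partition of `m / d` up to a partition of `m` -/
def scalePartition (d m : ℕ) (hd : d ≠ 0) (hdm : d ∣ m) (lam : Nat.Partition (m / d)) :
    Nat.Partition m where
  parts := d • lam.parts
  parts_pos := fun h => lam.parts_pos (Multiset.mem_of_mem_nsmul h)
  parts_sum := by rw [sum_nsmul_multiset, lam.parts_sum, Nat.mul_div_cancel' hdm]

lemma card_dvd_conjGcd (d m : ℕ) (hd : d ≠ 0) (hm : 0 < m) (hdm : d ∣ m) :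
    Nat.card {μ : Nat.Partition m // d ∣ conjGcd μ} = Nat.card (Nat.Partition (m / d)) := by
  refine (Nat.card_eq_of_bijective
    (fun lam => ⟨scalePartition d m hd hdm lam,
      (dvd_conjGcd_iff hd hm _).mpr ⟨lam.parts, rfl⟩⟩) ⟨?_, ?_⟩).symm
  · intro s t hst
    have h1 : d • s.parts = d • t.parts := congrArg (fun x => x.1.parts) hst
    have h2 : s.parts = t.parts := by
      ext a
      have := congrArg (Multiset.count a) h1
      rw [Multiset.count_nsmul, Multiset.count_nsmul] at this
      exact Nat.eq_of_mul_eq_mul_left (Nat.pos_of_ne_zero hd) this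
    cases s; cases t; simpa using h2
  · rintro ⟨μ, hμ⟩
    obtain ⟨u, hu⟩ := (dvd_conjGcd_iff hd hm μ).mp hμ
    have hsum : d * u.sum = m := by rw [← sum_nsmul_multiset, ← hu, μ.parts_sum]
    refine ⟨⟨u, ?_, ?_⟩, ?_⟩
    · intro x hx
      exact μ.parts_pos (by rw [hu]; exact (Multiset.mem_nsmul_of_ne_zero hd).mpr hx)
    · rw [← hsum, Nat.mul_div_cancel_left _ (Nat.pos_of_ne_zero hd)]
    · apply Subtype.ext
      cases μ
      simpa [scalePartition] using hu.symm

/-- Fix a prime `ℓ` and `m > 0` with `a := ν_ℓ(m)`.  Let `U_m(γ)` be the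
set of partitions `μ ⊢ m` with `ν_ℓ(Δ(μ′)) = γ`, where `Δ(μ′)` is the gcd of the parts of
the transpose, and let `p(k)` be the number of partitions of `k`.  Then
`|U_m(γ)| = p(m/ℓ^γ) − p(m/ℓ^{γ+1})` for `0 ≤ γ < a`, `|U_m(a)| = p(m/ℓ^a)`, and
`|U_m(γ)| = 0` for `γ > a`. -/
theorem stmt17 (ℓ m : ℕ) (hℓ : ℓ.Prime) (hm : 0 < m) (γ : ℕ) :
    (γ < padicValNat ℓ m →
      Nat.card {μ : Nat.Partition m // padicValNat ℓ (conjGcd μ) = γ} =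
        Nat.card (Nat.Partition (m / ℓ ^ γ)) - Nat.card (Nat.Partition (m / ℓ ^ (γ + 1)))) ∧
    (γ = padicValNat ℓ m →
      Nat.card {μ : Nat.Partition m // padicValNat ℓ (conjGcd μ) = γ} =
        Nat.card (Nat.Partition (m / ℓ ^ γ))) ∧
    (padicValNat ℓ m < γ →
      Nat.card {μ : Nat.Partition m // padicValNat ℓ (conjGcd μ) = γ} = 0) := by
  classical
  have hm0 : m ≠ 0 := hm.ne'
  -- conjGcd divides m and is nonzero
  have hgdvd : ∀ μ : Nat.Partition m, conjGcd μ ∣ m := by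
    intro μ
    have hne : conjGcd μ ≠ 0 := by
      intro h0
      have h1 : (1 : ℕ) ∈ Finset.Icc 1 m := Finset.mem_Icc.mpr ⟨le_refl 1, hm⟩
      have h3 := (Finset.gcd_eq_zero_iff.mp h0) 1 h1
      simp only [Multiset.card_eq_zero] at h3
      have he : (μ.parts.filter fun v => 1 ≤ v) = μ.parts := by
        rw [Multiset.filter_eq_self]; intro x hx; exact μ.parts_pos hx
      rw [he] at h3
      apply hm0
      have h4 := μ.parts_sum
      rw [h3] at h4
      simpa using h4.symm
    obtain ⟨u, hu⟩ := (dvd_conjGcd_iff hne hm μ).mp dvd_rfl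
    have hs : μ.parts.sum = conjGcd μ * u.sum := by rw [hu, sum_nsmul_multiset]
    exact ⟨u.sum, by rw [← hs]; exact μ.parts_sum.symm⟩
  have hg0 : ∀ μ : Nat.Partition m, conjGcd μ ≠ 0 := by
    intro μ h0
    exact hm0 (Nat.eq_zero_of_zero_dvd (h0 ▸ hgdvd μ))
  -- characterize valuation via divisibility
  have hval : ∀ (μ : Nat.Partition m) (c : ℕ),
      padicValNat ℓ (conjGcd μ) = c ↔ ℓ ^ c ∣ conjGcd μ ∧ ¬ ℓ ^ (c + 1) ∣ conjGcd μ := by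
    intro μ c
    rw [hℓ.pow_dvd_iff_le_factorization (hg0 μ), hℓ.pow_dvd_iff_le_factorization (hg0 μ),
      Nat.factorization_def _ hℓ]
    omega
  -- finite counting setup
  set S : ℕ → Finset (Nat.Partition m) :=
    fun c => Finset.univ.filter (fun μ => ℓ ^ c ∣ conjGcd μ) with hS
  have hScard : ∀ c : ℕ, ℓ ^ c ∣ m → (S c).card = Nat.card (Nat.Partition (m / ℓ ^ c)) := by
    intro c hc
    rw [← card_dvd_conjGcd (ℓ ^ c) m (pow_ne_zero c hℓ.pos.ne') hm hc,
      Nat.card_eq_fintype_card, Fintype.card_subtype]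
  have hSempty : ∀ c : ℕ, ¬ ℓ ^ c ∣ m → S c = ∅ := by
    intro c hc
    rw [Finset.eq_empty_iff_forall_notMem]
    intro μ hμ
    exact hc ((Finset.mem_filter.mp hμ).2.trans (hgdvd μ))
  have hUcard : ∀ c : ℕ,
      Nat.card {μ : Nat.Partition m // padicValNat ℓ (conjGcd μ) = c}
        = (S c \ S (c + 1)).card := by
    intro c
    rw [Nat.card_eq_fintype_card, Fintype.card_subtype]
    congr 1
    ext μ
    simp only [Finset.mem_filter, Finset.mem_sdiff, Finset.mem_univ, true_and, hS]
    rw [hval μ c]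
  have hsub : ∀ c : ℕ, S (c + 1) ⊆ S c := by
    intro c μ hμ
    rw [Finset.mem_filter] at hμ ⊢
    exact ⟨hμ.1, (pow_dvd_pow ℓ (Nat.le_succ c)).trans hμ.2⟩
  refine ⟨?_, ?_, ?_⟩
  · intro hγ
    have h1 : ℓ ^ γ ∣ m := (pow_dvd_pow ℓ hγ.le).trans (pow_padicValNat_dvd)
    have h2 : ℓ ^ (γ + 1) ∣ m := (pow_dvd_pow ℓ hγ).trans (pow_padicValNat_dvd)
    rw [hUcard γ, Finset.card_sdiff_of_subset (hsub γ), hScard γ h1, hScard (γ + 1) h2]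
  · intro hγ
    have h1 : ℓ ^ γ ∣ m := hγ ▸ pow_padicValNat_dvd
    have h2 : ¬ ℓ ^ (γ + 1) ∣ m := by
      intro h
      have := (hℓ.pow_dvd_iff_le_factorization hm0).mp h
      rw [Nat.factorization_def _ hℓ] at this
      omega
    rw [hUcard γ, hSempty (γ + 1) h2, Finset.sdiff_empty, hScard γ h1]
  · intro hγ
    have h2 : ¬ ℓ ^ γ ∣ m := by
      intro h
      have := (hℓ.pow_dvd_iff_le_factorization hm0).mp h
      rw [Nat.factorization_def _ hℓ] at this
      omega
    rw [hUcard γ, hSempty γ h2]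
    simp
end

section
/- Let q be a prime power, ℓ a prime not dividing q, η = ±1, e the multiplicative order of ηq modulo ℓ, and a = ν_ℓ((ηq)^e − 1) (with the convention a = ν_2(q+η) when ℓ = 2 and 4 | q+η). Suppose ξ ∈ F̄_q^× has multiplicative order k with ℓ ∤ k, and ξ′ ∈ F̄_q^× has order kℓ^α with α > 0. Let d (resp. d′) be the size of the orbit of ξ (resp. ξ′) under the map x ↦ x^{ηq}. If ℓ is odd, or ℓ = 2 with 4 | q−η, or ℓ = 2 with 4 | q+η and ν_2(d/ (e·d_0)) > 0 for the appropriate decomposition, then writing d = m e ℓ^{α_0} with ℓ ∤ m, one has d′ = d · ℓ^{max{0, α − a − α_0}}. -/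
section Aux

variable {G : Type*} [Group G]

private lemma iterate_zpow_eq (n : ℤ) (x : G) (j : ℕ) :
    (fun y : G => y ^ n)^[j] x = x ^ (n ^ j) := by
  induction j with
  | zero => simp
  | succ j ih => rw [Function.iterate_succ_apply', ih]; simp only [← zpow_mul, ← pow_succ]

private lemma isPeriodicPt_zpow_iff (n : ℤ) (x : G) (j : ℕ) :
    Function.IsPeriodicPt (fun y : G => y ^ n) j x ↔ ((n : ZMod (orderOf x)) ^ j = 1) := by
  rw [Function.IsPeriodicPt, Function.IsFixedPt, iterate_zpow_eq]
  have h1 : x ^ (n ^ j) = x ↔ x ^ (n ^ j - 1) = 1 := by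
    rw [zpow_sub, zpow_one, mul_inv_eq_one]
  rw [h1, ← orderOf_dvd_iff_zpow_eq_one, ← ZMod.intCast_zmod_eq_zero_iff_dvd]
  push_cast
  rw [sub_eq_zero]

private lemma minimalPeriod_zpow (n : ℤ) (x : G) :
    Function.minimalPeriod (fun y : G => y ^ n) x = orderOf ((n : ZMod (orderOf x))) := by
  apply Nat.dvd_antisymm
  · exact Function.IsPeriodicPt.minimalPeriod_dvd
      ((isPeriodicPt_zpow_iff n x _).mpr (pow_orderOf_eq_one _))
  · exact orderOf_dvd_of_pow_eq_one
      ((isPeriodicPt_zpow_iff n x _).mp (Function.isPeriodicPt_minimalPeriod _ _))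

private lemma zmod_pow_eq_one_iff (N : ℕ) (n : ℤ) (s : ℕ) :
    (n : ZMod N) ^ s = 1 ↔ (N : ℤ) ∣ n ^ s - 1 := by
  rw [← ZMod.intCast_zmod_eq_zero_iff_dvd]
  push_cast
  rw [sub_eq_zero]

private lemma emult_pow_sub_one {ℓ : ℕ} (hℓ : ℓ.Prime) {g : ℤ} (hg : ¬ (ℓ : ℤ) ∣ g)
    (hg1 : (ℓ : ℤ) ∣ g - 1) (hc : Odd ℓ ∨ (ℓ = 2 ∧ (4 : ℤ) ∣ g - 1)) (t : ℕ) :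
    emultiplicity (ℓ : ℤ) (g ^ t - 1) = emultiplicity (ℓ : ℤ) (g - 1) + emultiplicity ℓ t := by
  rcases hc with hodd | ⟨h2, h4⟩
  · have h := Int.emultiplicity_pow_sub_pow hℓ hodd hg1 hg t
    rwa [one_pow] at h
  · subst h2
    have h := Int.two_pow_sub_pow' t (by simpa using h4)
      (by exact_mod_cast hg)
    rw [one_pow] at h
    have hcast : emultiplicity (2 : ℤ) ((t : ℕ) : ℤ) = emultiplicity 2 t := by
      exact_mod_cast Int.natCast_emultiplicity 2 t
    rw [hcast] at h
    exact_mod_cast h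

private lemma key_iff {ℓ : ℕ} (hℓ : ℓ.Prime) {n : ℤ} (hn : ¬ (ℓ : ℤ) ∣ n) (hn2 : 1 < n.natAbs)
    (hc : Odd ℓ ∨ (ℓ = 2 ∧ (4 : ℤ) ∣ n - 1))
    (e a : ℕ) (he : e = orderOf ((n : ZMod ℓ))) (ha : a = padicValInt ℓ (n ^ e - 1))
    {α : ℕ} (hα : 0 < α) (s : ℕ) :
    (ℓ : ℤ) ^ α ∣ n ^ s - 1 ↔ e * ℓ ^ (α - a) ∣ s := by
  haveI : Fact ℓ.Prime := ⟨hℓ⟩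
  have hℓ2 := hℓ.two_le
  have hn0 : ((n : ZMod ℓ)) ≠ 0 := by rwa [Ne, ZMod.intCast_zmod_eq_zero_iff_dvd]
  have hedvd : e ∣ ℓ - 1 := by
    rw [he]; exact orderOf_dvd_of_pow_eq_one (ZMod.pow_card_sub_one_eq_one hn0)
  have he0 : 0 < e := by
    rcases Nat.eq_zero_or_pos e with h | h
    · exfalso; rw [h] at hedvd; have := Nat.eq_zero_of_zero_dvd hedvd; omega
    · exact h
  have step1 : ∀ s : ℕ, ((ℓ : ℤ) ∣ n ^ s - 1 ↔ e ∣ s) := by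
    intro s
    rw [show ((ℓ : ℤ)) = ((ℓ : ℕ) : ℤ) by norm_cast, ← zmod_pow_eq_one_iff, he]
    exact orderOf_dvd_iff_pow_eq_one.symm
  have hgne : n ^ e - 1 ≠ 0 := by
    rw [sub_ne_zero]
    intro h
    have h1 : n.natAbs ^ e = 1 := by
      rw [← Int.natAbs_pow, h]; rfl
    have h2 : 1 < n.natAbs ^ e := Nat.one_lt_pow he0.ne' hn2
    omega
  have hgdvd : (ℓ : ℤ) ∣ n ^ e - 1 := (step1 e).mpr dvd_rfl
  have hgnd : ¬ (ℓ : ℤ) ∣ n ^ e := fun h => hn ((Nat.prime_iff_prime_int.mp hℓ).dvd_of_dvd_pow h)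
  have hc' : Odd ℓ ∨ (ℓ = 2 ∧ (4 : ℤ) ∣ n ^ e - 1) := by
    rcases hc with h | ⟨h2, h4⟩
    · exact Or.inl h
    · refine Or.inr ⟨h2, ?_⟩
      subst h2
      have he1 : e = 1 := Nat.dvd_one.mp (by simpa using hedvd)
      rw [he1, pow_one]
      exact h4
  have hma : emultiplicity (ℓ : ℤ) (n ^ e - 1) = (a : ℕ∞) := by
    have hfin : FiniteMultiplicity ((ℓ : ℤ)) (n ^ e - 1) :=
      Int.finiteMultiplicity_iff.mpr ⟨by simpa using hℓ.ne_one, hgne⟩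
    rw [hfin.emultiplicity_eq_multiplicity, ha,
      padicValInt.of_ne_one_ne_zero hℓ.ne_one hgne]
  rcases Nat.eq_zero_or_pos s with rfl | hs
  · simp
  constructor
  · intro hdvd
    have hℓd : (ℓ : ℤ) ∣ n ^ s - 1 := dvd_trans (dvd_pow_self _ hα.ne') hdvd
    obtain ⟨t, rfl⟩ := (step1 s).mp hℓd
    have ht : 0 < t := by
      rcases Nat.eq_zero_or_pos t with rfl | h
      · simp at hs
      · exact h
    have hfin : FiniteMultiplicity ℓ t := Nat.finiteMultiplicity_iff.mpr ⟨hℓ.ne_one, ht⟩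
    have hle : (α : ℕ∞) ≤ emultiplicity (ℓ : ℤ) (n ^ (e * t) - 1) :=
      le_emultiplicity_of_pow_dvd hdvd
    rw [pow_mul, emult_pow_sub_one hℓ hgnd hgdvd hc' t, hma,
      hfin.emultiplicity_eq_multiplicity] at hle
    have hle' : α ≤ a + multiplicity ℓ t := by exact_mod_cast hle
    exact mul_dvd_mul_left e
      ((pow_dvd_pow ℓ (by omega)).trans (pow_dvd_of_le_multiplicity le_rfl))
  · intro hdvd
    have het : e ∣ s := dvd_trans (dvd_mul_right e _) hdvd
    obtain ⟨t, rfl⟩ := het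
    have hpt : ℓ ^ (α - a) ∣ t := (mul_dvd_mul_iff_left he0.ne').mp hdvd
    rw [pow_dvd_iff_le_emultiplicity, pow_mul, emult_pow_sub_one hℓ hgnd hgdvd hc' t, hma]
    calc (α : ℕ∞) ≤ ((a + (α - a) : ℕ) : ℕ∞) := by exact_mod_cast (by omega : α ≤ a + (α - a))
      _ ≤ (a : ℕ∞) + emultiplicity ℓ t := by
          rw [Nat.cast_add]
          exact add_le_add_right (le_emultiplicity_of_pow_dvd hpt) _

private lemma ord_zmod_prime_pow {ℓ : ℕ} (hℓ : ℓ.Prime) {n : ℤ} (hn : ¬ (ℓ : ℤ) ∣ n)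
    (hn2 : 1 < n.natAbs) (hc : Odd ℓ ∨ (ℓ = 2 ∧ (4 : ℤ) ∣ n - 1))
    (e a : ℕ) (he : e = orderOf ((n : ZMod ℓ))) (ha : a = padicValInt ℓ (n ^ e - 1))
    {α : ℕ} (hα : 0 < α) :
    orderOf ((n : ZMod (ℓ ^ α))) = e * ℓ ^ (α - a) := by
  have hiff : ∀ s : ℕ, (orderOf ((n : ZMod (ℓ ^ α))) ∣ s ↔ e * ℓ ^ (α - a) ∣ s) := by
    intro s
    rw [orderOf_dvd_iff_pow_eq_one, zmod_pow_eq_one_iff, Nat.cast_pow]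
    exact key_iff hℓ hn hn2 hc e a he ha hα s
  exact Nat.dvd_antisymm ((hiff _).mpr dvd_rfl) ((hiff _).mp dvd_rfl)

private lemma lcm_calc {ℓ m e : ℕ} (hℓ : ℓ.Prime) (hm : ¬ ℓ ∣ m) (he : ¬ ℓ ∣ e) (α₀ β : ℕ) :
    Nat.lcm (m * e * ℓ ^ α₀) (e * ℓ ^ β) = m * e * ℓ ^ α₀ * ℓ ^ (β - α₀) := by
  have hcop : Nat.Coprime (m * e) (ℓ ^ (max α₀ β)) :=
    (Nat.Coprime.mul (hℓ.coprime_iff_not_dvd.mpr hm).symm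
      (hℓ.coprime_iff_not_dvd.mpr he).symm).pow_right _
  apply Nat.dvd_antisymm
  · apply Nat.lcm_dvd
    · exact dvd_mul_right _ _
    · have h : e * ℓ ^ β ∣ (m * e) * ℓ ^ (α₀ + (β - α₀)) :=
        mul_dvd_mul (dvd_mul_left e m) (pow_dvd_pow ℓ (by omega))
      calc e * ℓ ^ β ∣ (m * e) * ℓ ^ (α₀ + (β - α₀)) := h
        _ = m * e * ℓ ^ α₀ * ℓ ^ (β - α₀) := by rw [pow_add]; ring
  · have h1 : m * e ∣ Nat.lcm (m * e * ℓ ^ α₀) (e * ℓ ^ β) :=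
      dvd_trans (dvd_mul_right _ _) (Nat.dvd_lcm_left _ _)
    have h2 : ℓ ^ (max α₀ β) ∣ Nat.lcm (m * e * ℓ ^ α₀) (e * ℓ ^ β) := by
      rcases le_total α₀ β with h | h
      · rw [max_eq_right h]; exact dvd_trans (dvd_mul_left _ _) (Nat.dvd_lcm_right _ _)
      · rw [max_eq_left h]; exact dvd_trans (dvd_mul_left _ _) (Nat.dvd_lcm_left _ _)
    have h3 := Nat.Coprime.mul_dvd_of_dvd_of_dvd hcop h1 h2
    have hmax : max α₀ β = α₀ + (β - α₀) := by omega
    calc m * e * ℓ ^ α₀ * ℓ ^ (β - α₀) = m * e * ℓ ^ (max α₀ β) := by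
          rw [hmax, pow_add]; ring
      _ ∣ _ := h3

end Aux

theorem stmt18 (p f q : ℕ) (hp : p.Prime) (hf : 0 < f) (hq : q = p ^ f)
    (ℓ : ℕ) (hℓ : ℓ.Prime) (hℓq : ¬ ℓ ∣ q)
    (η : ℤ) (hη : η = 1 ∨ η = -1)
    (hcase : Odd ℓ ∨ (ℓ = 2 ∧ (4 : ℤ) ∣ (q : ℤ) - η))
    (e a : ℕ) (he : e = orderOf ((η * (q : ℤ) : ℤ) : ZMod ℓ))
    (ha : a = padicValInt ℓ ((η * (q : ℤ)) ^ e - 1))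
    (K : Type*) [Field K] (hchar : CharP K p)
    (ξ ξ' : Kˣ) (k : ℕ) (hk : 0 < k) (hℓk : ¬ ℓ ∣ k)
    (hordξ : orderOf ξ = k)
    (α : ℕ) (hα : 0 < α) (hordξ' : orderOf ξ' = k * ℓ ^ α)
    (d d' : ℕ)
    (hd : d = Function.minimalPeriod (fun x : Kˣ => x ^ (η * (q : ℤ))) ξ)
    (hd' : d' = Function.minimalPeriod (fun x : Kˣ => x ^ (η * (q : ℤ))) ξ')
    (m α₀ : ℕ) (hm : ¬ ℓ ∣ m) (hdecomp : d = m * e * ℓ ^ α₀) :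
    d' = d * ℓ ^ (α - a - α₀) := by
  have hq2 : 2 ≤ q := by
    subst hq
    have := Nat.one_lt_pow hf.ne' hp.one_lt
    omega
  set n : ℤ := η * (q : ℤ) with hn
  have hη2 : η * η = 1 := by rcases hη with rfl | rfl <;> norm_num
  have hnq : ¬ (ℓ : ℤ) ∣ n := by
    intro h
    apply hℓq
    have h' : (ℓ : ℤ) ∣ (q : ℤ) := by
      rcases hη with rfl | rfl
      · simpa [hn] using h
      · rw [hn] at h
        simpa using (dvd_neg).mpr h
    exact_mod_cast h'
  have hn2 : 1 < n.natAbs := by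
    have hna : n.natAbs = q := by
      rcases hη with rfl | rfl <;> simp [hn, Int.natAbs_mul]
    omega
  have hc' : Odd ℓ ∨ (ℓ = 2 ∧ (4 : ℤ) ∣ n - 1) := by
    rcases hcase with h | ⟨h2, h4⟩
    · exact Or.inl h
    · refine Or.inr ⟨h2, ?_⟩
      have heq : η * ((q : ℤ) - η) = n - 1 := by rw [hn, mul_sub, hη2]
      rw [← heq]
      exact Dvd.dvd.mul_left h4 η
  haveI : Fact ℓ.Prime := ⟨hℓ⟩
  have hℓ2 := hℓ.two_le
  have hn0 : ((n : ZMod ℓ)) ≠ 0 := by rwa [Ne, ZMod.intCast_zmod_eq_zero_iff_dvd]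
  have hedvd : e ∣ ℓ - 1 := by
    rw [he]; exact orderOf_dvd_of_pow_eq_one (ZMod.pow_card_sub_one_eq_one hn0)
  have he0 : 0 < e := by
    rcases Nat.eq_zero_or_pos e with h | h
    · exfalso; rw [h] at hedvd; have := Nat.eq_zero_of_zero_dvd hedvd; omega
    · exact h
  have hℓe : ¬ ℓ ∣ e := by
    intro h
    have := Nat.le_of_dvd (by omega) (h.trans hedvd)
    omega
  have hd1 : d = orderOf ((n : ZMod k)) := by
    rw [hd, minimalPeriod_zpow, hordξ]
  have hd'1 : d' = orderOf ((n : ZMod (k * ℓ ^ α))) := by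
    rw [hd', minimalPeriod_zpow, hordξ']
  have hcop : Nat.Coprime k (ℓ ^ α) :=
    Nat.Coprime.pow_right _ ((hℓ.coprime_iff_not_dvd.mpr hℓk).symm)
  have hsplit : orderOf ((n : ZMod (k * ℓ ^ α))) =
      Nat.lcm (orderOf ((n : ZMod k))) (orderOf ((n : ZMod (ℓ ^ α)))) := by
    have h1 := MulEquiv.orderOf_eq (ZMod.chineseRemainder hcop).toMulEquiv
      ((n : ZMod (k * ℓ ^ α)))
    rw [← h1]
    have h2 : (ZMod.chineseRemainder hcop).toMulEquiv ((n : ZMod (k * ℓ ^ α))) =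
        ((n : ZMod k), (n : ZMod (ℓ ^ α))) := by
      have h3 : (ZMod.chineseRemainder hcop) ((n : ZMod (k * ℓ ^ α))) =
          ((n : ℤ) : ZMod k × ZMod (ℓ ^ α)) := map_intCast _ n
      rw [show ((ZMod.chineseRemainder hcop).toMulEquiv ((n : ZMod (k * ℓ ^ α)))) =
        (ZMod.chineseRemainder hcop) ((n : ZMod (k * ℓ ^ α))) from rfl, h3]
      rfl
    rw [h2, Prod.orderOf]
  have hord2 : orderOf ((n : ZMod (ℓ ^ α))) = e * ℓ ^ (α - a) :=
    ord_zmod_prime_pow hℓ hnq hn2 hc' e a he ha hα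
  rw [hd'1, hsplit, ← hd1, hord2, hdecomp, lcm_calc hℓ hm hℓe]
end
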